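/- arXiv:2111.03961 — 5 statements merged into one kernel-verified Lean document; each statement's English description precedes it below -/
import Mathlib

section
/- Let v_1, …, v_n be unit vectors in ℂ^d and let t_1, …, t_n be non-negative real numbers satisfying ∑_{k=1}^n t_k^2 = 1. Then there exists a unit vector v in ℂ^d such that |⟨v_k, v⟩| ≥ t_k for every k = 1, …, n. -/
open Finset Metric

lemma plank_exists_inner_ne_zero {n d : ℕ} (v : Fin n → EuclideanSpace ℂ (Fin d))
    (hv : ∀ k, v k ≠ 0) (k₀ : Fin n) :
    ∃ u : EuclideanSpace ℂ (Fin d), u ≠ 0 ∧ ∀ k, (inner ℂ (v k) u : ℂ) ≠ 0 := by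
  suffices h : ∀ s : Finset (Fin n), ∃ u : EuclideanSpace ℂ (Fin d), u ≠ 0 ∧
      ∀ k ∈ s, (inner ℂ (v k) u : ℂ) ≠ 0 by
    obtain ⟨u, hu, h⟩ := h Finset.univ
    exact ⟨u, hu, fun k => h k (Finset.mem_univ k)⟩
  intro s
  induction s using Finset.induction_on with
  | empty => exact ⟨v k₀, hv k₀, by simp⟩
  | @insert a s ha ih =>
    obtain ⟨u, hu, hus⟩ := ih
    set w := v a with hw
    -- bad values of ε
    set B : Finset ℂ := (insert a s).image
      (fun k => -(inner ℂ (v k) u : ℂ) / (inner ℂ (v k) w : ℂ)) with hB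
    obtain ⟨ε, hε⟩ := Infinite.exists_notMem_finset B
    have hall : ∀ k ∈ insert a s, (inner ℂ (v k) (u + ε • w) : ℂ) ≠ 0 := by
      intro k hk
      have hlin : (inner ℂ (v k) (u + ε • w) : ℂ) = inner ℂ (v k) u + ε * inner ℂ (v k) w := by
        simp [inner_add_right, inner_smul_right]
      rw [hlin]
      by_cases hd : (inner ℂ (v k) w : ℂ) = 0
      · rcases Finset.mem_insert.1 hk with rfl | hks
        · exact absurd hd (by simpa [hw] using (inner_self_ne_zero (𝕜 := ℂ)).2 (hv k))
        · simpa [hd] using hus k hks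
      · intro hzero
        apply hε
        rw [hB]
        refine Finset.mem_image.2 ⟨k, hk, ?_⟩
        rw [div_eq_iff hd]
        linear_combination -hzero
    refine ⟨u + ε • w, ?_, hall⟩
    intro h0
    exact hall a (Finset.mem_insert_self a s) (by rw [h0, inner_zero_right])

lemma plank_core_mono {a N : ℕ} (ha : 1 ≤ a) (haN : a ≤ N) {x y : ℝ} (hx : 0 < x)
    (hxy : x < y) (hy : ((N : ℝ) - a) * y ≤ a) :
    x ^ a * (1 + y) ^ N < y ^ a * (1 + x) ^ N := by
  have hy0 : 0 < y := hx.trans hxy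
  set φ : ℝ → ℝ := fun z => a * Real.log z - N * Real.log (1 + z) with hφ
  have hmono : StrictMonoOn φ (Set.Icc x y) := by
    apply strictMonoOn_of_deriv_pos (convex_Icc x y)
    · intro z hz
      have hz0 : (0:ℝ) < z := lt_of_lt_of_le hx hz.1
      have h1z : (0:ℝ) < 1 + z := by linarith
      apply ContinuousAt.continuousWithinAt
      have c1 : ContinuousAt (fun z : ℝ => Real.log z) z :=
        Real.continuousAt_log (ne_of_gt hz0)
      have c2 : ContinuousAt (fun z : ℝ => Real.log (1 + z)) z :=
        (Real.continuousAt_log (ne_of_gt h1z)).comp (by fun_prop)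
      exact (c1.const_mul _).sub (c2.const_mul _)
    · intro z hz
      rw [interior_Icc] at hz
      have hz0 : 0 < z := hx.trans hz.1
      have h1z : (0:ℝ) < 1 + z := by linarith
      have hd : HasDerivAt φ (a * z⁻¹ - N * (1 + z)⁻¹) z := by
        have h1 : HasDerivAt (fun z : ℝ => a * Real.log z) (a * z⁻¹) z :=
          (Real.hasDerivAt_log (ne_of_gt hz0)).const_mul _
        have h2 : HasDerivAt (fun z : ℝ => Real.log (1 + z)) ((1 + z)⁻¹) z := by
          have := (Real.hasDerivAt_log (ne_of_gt h1z)).comp z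
            ((hasDerivAt_id z).const_add 1)
          simpa [Function.comp_def] using this
        exact h1.sub (h2.const_mul _)
      rw [hd.deriv]
      -- positivity: a(1+z) - N z = a - (N-a) z > 0
      have key : ((N:ℝ) - a) * z < a := by
        rcases eq_or_lt_of_le (by exact_mod_cast haN : (a:ℝ) ≤ N) with h | h
        · rw [← h]; simpa using (by exact_mod_cast ha : (0:ℝ) < a)
        · calc ((N:ℝ) - a) * z < ((N:ℝ) - a) * y := by
                apply mul_lt_mul_of_pos_left hz.2 (by linarith)
          _ ≤ a := hy
      have : (N:ℝ) * (1 + z)⁻¹ < a * z⁻¹ := by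
        have h1 : (N:ℝ) * (1 + z)⁻¹ = N / (1 + z) := by ring
        have h2 : (a:ℝ) * z⁻¹ = a / z := by ring
        rw [h1, h2, div_lt_div_iff₀ h1z hz0]
        nlinarith
      linarith
  have hlt : φ x < φ y := hmono (Set.left_mem_Icc.2 hxy.le) (Set.right_mem_Icc.2 hxy.le) hxy
  have hlog : Real.log (x ^ a * (1 + y) ^ N) < Real.log (y ^ a * (1 + x) ^ N) := by
    rw [Real.log_mul (by positivity) (by positivity),
      Real.log_mul (by positivity) (by positivity), Real.log_pow, Real.log_pow,
      Real.log_pow, Real.log_pow]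
    simp only [hφ] at hlt
    push_cast
    nlinarith [hlt]
  exact (Real.log_lt_log_iff (by positivity) (by positivity)).1 hlog

lemma plank_rational {n d : ℕ} (v : Fin n → EuclideanSpace ℂ (Fin d)) (hv : ∀ k, ‖v k‖ = 1)
    (a : Fin n → ℕ) (N : ℕ) (hN : 0 < N) (hsum : ∑ k, a k = N) (k₀ : Fin n) :
    ∃ u : EuclideanSpace ℂ (Fin d), ‖u‖ = 1 ∧
      ∀ k, (a k : ℝ) / N ≤ ‖(inner ℂ (v k) u : ℂ)‖ ^ 2 := by
  set Φ : EuclideanSpace ℂ (Fin d) → ℝ := fun x => ∏ k, ‖(inner ℂ (v k) x : ℂ)‖ ^ a k with hΦdef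
  have hΦc : Continuous Φ := by
    apply continuous_finset_prod
    intro k _
    exact ((Continuous.inner continuous_const continuous_id).norm).pow _
  have hvk₀ : v k₀ ∈ sphere (0 : EuclideanSpace ℂ (Fin d)) 1 :=
    mem_sphere_zero_iff_norm.2 (hv k₀)
  obtain ⟨u₀, hu₀s, hmax⟩ := (isCompact_sphere (0 : EuclideanSpace ℂ (Fin d)) 1).exists_isMaxOn
    ⟨v k₀, hvk₀⟩ hΦc.continuousOn
  have hu₀ : ‖u₀‖ = 1 := mem_sphere_zero_iff_norm.1 hu₀s
  -- positivity of the maximum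
  have hΦ₀pos : 0 < Φ u₀ := by
    obtain ⟨w, hw0, hwne⟩ := plank_exists_inner_ne_zero v
      (fun k h => absurd (hv k) (by simp [h])) k₀
    have hwn : (0:ℝ) < ‖w‖ := norm_pos_iff.2 hw0
    set upos : EuclideanSpace ℂ (Fin d) := ((‖w‖ : ℂ))⁻¹ • w with huposdef
    have hupos : upos ∈ sphere (0 : EuclideanSpace ℂ (Fin d)) 1 := by
      rw [mem_sphere_zero_iff_norm, huposdef, norm_smul]
      simp [abs_of_pos hwn, inv_mul_cancel₀ (ne_of_gt hwn)]
    have hpos : 0 < Φ upos := by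
      apply Finset.prod_pos
      intro k _
      apply pow_pos
      rw [huposdef, inner_smul_right]
      simp only [norm_mul]
      apply mul_pos _ (norm_pos_iff.2 (hwne k))
      simp [hwn, ne_of_gt hwn]
    exact lt_of_lt_of_le hpos (hmax hupos)
  -- global bound : Φ x ≤ ‖x‖ ^ N * Φ u₀
  have hkey : ∀ x : EuclideanSpace ℂ (Fin d), Φ x ≤ ‖x‖ ^ N * Φ u₀ := by
    intro x
    rcases eq_or_ne x 0 with rfl | hx0
    · obtain ⟨k₁, hk₁⟩ : ∃ k, a k ≠ 0 := by
        by_contra h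
        push_neg at h
        rw [Finset.sum_eq_zero (fun k _ => h k)] at hsum
        omega
      have : Φ (0 : EuclideanSpace ℂ (Fin d)) = 0 := by
        apply Finset.prod_eq_zero (Finset.mem_univ k₁)
        simp [zero_pow hk₁]
      rw [this]
      positivity
    · have hxn : (0:ℝ) < ‖x‖ := norm_pos_iff.2 hx0
      set u : EuclideanSpace ℂ (Fin d) := ((‖x‖ : ℂ))⁻¹ • x with hudef
      have hus : u ∈ sphere (0 : EuclideanSpace ℂ (Fin d)) 1 := by
        rw [mem_sphere_zero_iff_norm, hudef, norm_smul]
        simp [abs_of_pos hxn, inv_mul_cancel₀ (ne_of_gt hxn)]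
      have hΦu : Φ u = (‖x‖⁻¹) ^ N * Φ x := by
        simp only [hΦdef, hudef, inner_smul_right, norm_mul, mul_pow]
        rw [Finset.prod_mul_distrib]
        congr 1
        calc ∏ k : Fin n, ‖((‖x‖:ℂ))⁻¹‖ ^ a k = ∏ k : Fin n, (‖x‖⁻¹) ^ a k := by
              apply Finset.prod_congr rfl; intro k _; congr 1; simp
          _ = (‖x‖⁻¹) ^ ∑ k : Fin n, a k := Finset.prod_pow_eq_pow_sum _ _ _
          _ = _ := by rw [hsum]
      have h1 : Φ u ≤ Φ u₀ := hmax hus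
      rw [hΦu] at h1
      calc Φ x = ‖x‖ ^ N * ((‖x‖⁻¹) ^ N * Φ x) := by
            rw [← mul_assoc, ← mul_pow, mul_inv_cancel₀ (ne_of_gt hxn), one_pow, one_mul]
        _ ≤ ‖x‖ ^ N * Φ u₀ := by
            apply mul_le_mul_of_nonneg_left h1 (by positivity)
  refine ⟨u₀, hu₀, ?_⟩
  intro m
  rcases Nat.eq_zero_or_pos (a m) with ham | ham
  · rw [ham]
    norm_num
  -- main case: a m ≥ 1
  have hN' : (0:ℝ) < N := by exact_mod_cast hN
  set β : ℂ := inner ℂ (v m) u₀ with hβdef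
  have hβ : β ≠ 0 := by
    intro h
    have : Φ u₀ = 0 := by
      apply Finset.prod_eq_zero (Finset.mem_univ m)
      rw [← hβdef, h]
      simp [zero_pow (by omega : a m ≠ 0)]
    exact absurd this (ne_of_gt hΦ₀pos)
  have hamN : a m ≤ N := by
    rw [← hsum]
    exact Finset.single_le_sum (fun k _ => Nat.zero_le _) (Finset.mem_univ m)
  by_cases hpar : u₀ - β • v m = 0
  · -- parallel case : ‖β‖ = 1
    have hβ1 : ‖β‖ = 1 := by
      have hEq : u₀ = β • v m := by rwa [sub_eq_zero] at hpar
      have h2 : ‖u₀‖ = ‖β‖ * ‖v m‖ := by rw [hEq, norm_smul]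
      rw [hu₀, hv m, mul_one] at h2
      exact h2.symm
    rw [hβ1, one_pow, div_le_one hN']
    exact_mod_cast hamN
  · set α : ℝ := ‖u₀ - β • v m‖ with hαdef
    have hα : 0 < α := norm_pos_iff.2 hpar
    have hαC : (α : ℂ) ≠ 0 := by exact_mod_cast ne_of_gt hα
    set e₁ : EuclideanSpace ℂ (Fin d) := ((α:ℂ))⁻¹ • (u₀ - β • v m) with he₁def
    have hvm_inner : (inner ℂ (v m) (v m) : ℂ) = 1 := by
      rw [inner_self_eq_norm_sq_to_K, hv m]
      norm_num
    have hbm : (inner ℂ (v m) e₁ : ℂ) = 0 := by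
      rw [he₁def, inner_smul_right, inner_sub_right, inner_smul_right, hvm_inner, ← hβdef]
      ring
    have hperp : (inner ℂ e₁ (v m) : ℂ) = 0 := by
      rw [← inner_conj_symm, hbm, map_zero]
    have he₁ : ‖e₁‖ = 1 := by
      rw [he₁def, norm_smul, ← hαdef]
      have : ‖((α:ℝ):ℂ)⁻¹‖ = α⁻¹ := by
        rw [norm_inv, Complex.norm_real, Real.norm_eq_abs, abs_of_pos hα]
      rw [this, inv_mul_cancel₀ (ne_of_gt hα)]
    have hu₀eq : u₀ = (α:ℂ) • e₁ + β • v m := by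
      rw [he₁def, smul_smul, mul_inv_cancel₀ hαC, one_smul]
      abel
    have hαβ : α ^ 2 + ‖β‖ ^ 2 = 1 := by
      have hx : (inner ℂ ((α:ℂ) • e₁) (β • v m) : ℂ) = 0 := by
        rw [inner_smul_left, inner_smul_right, hperp]
        ring
      have hsq := norm_add_sq (𝕜 := ℂ) ((α:ℂ) • e₁) (β • v m)
      rw [← hu₀eq, hu₀, hx] at hsq
      have h1 : ‖(α:ℂ) • e₁‖ = α := by
        rw [norm_smul, he₁, mul_one, Complex.norm_real, Real.norm_eq_abs, abs_of_pos hα]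
      have h2 : ‖β • v m‖ = ‖β‖ := by rw [norm_smul, hv m, mul_one]
      rw [h1, h2] at hsq
      simp at hsq
      linarith [hsq]
    set p : ℂ := β / (α:ℂ) with hpdef
    have hp : p ≠ 0 := div_ne_zero hβ hαC
    have hppos : 0 < ‖p‖ := norm_pos_iff.2 hp
    have hpnorm : ‖p‖ = ‖β‖ / α := by
      rw [hpdef, norm_div, Complex.norm_real, Real.norm_eq_abs, abs_of_pos hα]
    set b : Fin n → ℂ := fun k => inner ℂ (v k) e₁ with hbdef
    set g : Fin n → ℂ := fun k => inner ℂ (v k) (v m) with hgdef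
    have hαp : (α:ℂ) * p = β := by
      rw [hpdef, mul_div_cancel₀ _ hαC]
    have hinner_u₀ : ∀ k, (inner ℂ (v k) u₀ : ℂ) = (α:ℂ) * (b k + p * g k) := by
      intro k
      have h1 : (inner ℂ (v k) u₀ : ℂ) = (α:ℂ) * b k + β * g k := by
        simp only [hbdef, hgdef]
        rw [hu₀eq]
        simp only [inner_add_right, inner_smul_right]
      rw [h1, mul_add, ← mul_assoc, hαp]
    have hxnorm : ∀ w : ℂ, ‖e₁ + w • v m‖ ^ 2 = 1 + ‖w‖ ^ 2 := by
      intro w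
      have hx : (inner ℂ e₁ (w • v m) : ℂ) = 0 := by
        rw [inner_smul_right, hperp, mul_zero]
      have hsq := norm_add_sq (𝕜 := ℂ) e₁ (w • v m)
      rw [hx, he₁] at hsq
      have h2 : ‖w • v m‖ = ‖w‖ := by rw [norm_smul, hv m, mul_one]
      rw [h2] at hsq
      simpa using hsq
    have KEY : ∀ w : ℂ, (∏ k, ‖b k + w * g k‖ ^ a k) ≤ Real.sqrt (1 + ‖w‖^2) ^ N * Φ u₀ := by
      intro w
      have h1 := hkey (e₁ + w • v m)
      have h2 : Φ (e₁ + w • v m) = ∏ k, ‖b k + w * g k‖ ^ a k := by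
        rw [hΦdef]
        apply Finset.prod_congr rfl
        intro k _
        simp only [hbdef, hgdef, inner_add_right, inner_smul_right]
      have h3 : ‖e₁ + w • v m‖ = Real.sqrt (1 + ‖w‖^2) := by
        rw [← hxnorm w, Real.sqrt_sq (norm_nonneg _)]
      rw [h2, h3] at h1
      exact h1
    -- contradiction setup
    by_contra hcon
    push_neg at hcon
    have hbm' : b m = 0 := hbm
    have hgm : g m = 1 := hvm_inner
    clear_value Φ β α e₁ p b g
    set x₁ : ℝ := ‖p‖ ^ 2 with hx₁def
    have hx₁pos : 0 < x₁ := pow_pos hppos 2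
    have hx₁eq : x₁ * α ^ 2 = ‖β‖ ^ 2 := by
      rw [hx₁def, hpnorm]
      field_simp
    have hNβ : (N:ℝ) * ‖β‖ ^ 2 < a m := by
      have := (lt_div_iff₀ hN').1 hcon
      linarith
    have hx₁rel : ((N:ℝ) - a m) * x₁ < a m := by
      have hα2 : 0 < α ^ 2 := pow_pos hα 2
      nlinarith [hx₁eq, hαβ, hNβ, hx₁pos]
    set x₂ : ℝ := x₁ + ((a m:ℝ) - ((N:ℝ) - a m) * x₁)/(N+1) with hx₂def
    have hgap : 0 < ((a m:ℝ) - ((N:ℝ) - a m) * x₁)/((N:ℝ)+1) := by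
      apply div_pos (by linarith) (by positivity)
    have hx₁₂ : x₁ < x₂ := by
      rw [hx₂def]
      linarith
    have hx₂pos : 0 < x₂ := hx₁pos.trans hx₁₂
    have hx₂rel : ((N:ℝ) - a m) * x₂ ≤ a m := by
      have hs : (0:ℝ) < (a m:ℝ) - ((N:ℝ) - a m) * x₁ := by linarith
      have hfrac : ((N:ℝ) - a m)/((N:ℝ)+1) ≤ 1 := by
        rw [div_le_one (by positivity)]
        have : (0:ℝ) ≤ a m := Nat.cast_nonneg _
        linarith
      have h5 : ((N:ℝ) - a m) * (((a m:ℝ) - ((N:ℝ) - a m) * x₁)/((N:ℝ)+1))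
          ≤ (a m:ℝ) - ((N:ℝ) - a m) * x₁ := by
        calc ((N:ℝ) - a m) * (((a m:ℝ) - ((N:ℝ) - a m) * x₁)/((N:ℝ)+1))
            = (((N:ℝ) - a m)/((N:ℝ)+1)) * ((a m:ℝ) - ((N:ℝ) - a m) * x₁) := by ring
          _ ≤ 1 * ((a m:ℝ) - ((N:ℝ) - a m) * x₁) :=
              mul_le_mul_of_nonneg_right hfrac hs.le
          _ = (a m:ℝ) - ((N:ℝ) - a m) * x₁ := one_mul _
      have hexp : ((N:ℝ) - a m) * x₂ = ((N:ℝ) - a m) * x₁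
          + ((N:ℝ) - a m) * (((a m:ℝ) - ((N:ℝ) - a m) * x₁)/((N:ℝ)+1)) := by
        rw [hx₂def]; ring
      rw [hexp]
      linarith [h5]
    set Y : ℝ := Real.sqrt x₂ with hYdef
    have hY : 0 < Y := Real.sqrt_pos.2 hx₂pos
    have hYp : ‖p‖ < Y := by
      calc ‖p‖ = Real.sqrt x₁ := by rw [hx₁def, Real.sqrt_sq (norm_nonneg p)]
        _ < Real.sqrt x₂ := Real.sqrt_lt_sqrt hx₁pos.le hx₁₂
    have hYsq : Y ^ 2 = x₂ := Real.sq_sqrt hx₂pos.le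
    set F : ℂ → ℂ := fun w => ∏ k ∈ Finset.univ.erase m, (b k + w * g k) ^ a k with hFdef
    have hFdiff : Differentiable ℂ F := by
      apply Differentiable.fun_finsetProd
      intro k _
      exact ((differentiable_id.mul_const _).const_add _).pow _
    have hFnorm : ∀ w : ℂ, ‖F w‖ * ‖w‖ ^ a m = ∏ k, ‖b k + w * g k‖ ^ a k := by
      intro w
      rw [hFdef]
      simp only [norm_prod, norm_pow]
      rw [show ‖w‖ ^ a m = ‖b m + w * g m‖ ^ a m by rw [hbm', hgm]; simp]
      exact Finset.prod_erase_mul _ _ (Finset.mem_univ m)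
    have hCb : ∀ w ∈ frontier (Metric.ball (0:ℂ) Y),
        ‖F w‖ ≤ Real.sqrt (1+x₂) ^ N * Φ u₀ / Y ^ a m := by
      intro w hw
      rw [frontier_ball (0:ℂ) (ne_of_gt hY)] at hw
      have hwY : ‖w‖ = Y := mem_sphere_zero_iff_norm.1 hw
      rw [le_div_iff₀ (by positivity)]
      calc ‖F w‖ * Y ^ a m = ∏ k, ‖b k + w * g k‖ ^ a k := by
            rw [← hwY]; exact hFnorm w
        _ ≤ Real.sqrt (1 + ‖w‖^2) ^ N * Φ u₀ := KEY w
        _ = Real.sqrt (1 + x₂) ^ N * Φ u₀ := by rw [hwY, hYsq]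
    have hMMP : ‖F p‖ ≤ Real.sqrt (1+x₂) ^ N * Φ u₀ / Y ^ a m :=
      Complex.norm_le_of_forall_mem_frontier_norm_le isBounded_ball
        hFdiff.diffContOnCl hCb (subset_closure (mem_ball_zero_iff.2 hYp))
    have hbpg : ∀ k, ‖b k + p * g k‖ = α⁻¹ * ‖(inner ℂ (v k) u₀ : ℂ)‖ := by
      intro k
      rw [hinner_u₀ k, norm_mul, Complex.norm_real, Real.norm_eq_abs, abs_of_pos hα]
      field_simp
    have hFp : ‖F p‖ * ‖p‖ ^ a m = (α⁻¹) ^ N * Φ u₀ := by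
      rw [hFnorm p]
      calc ∏ k, ‖b k + p * g k‖ ^ a k
          = ∏ k, (α⁻¹ ^ a k * ‖(inner ℂ (v k) u₀ : ℂ)‖ ^ a k) := by
            apply Finset.prod_congr rfl
            intro k _
            rw [hbpg k, mul_pow]
        _ = (∏ k : Fin n, α⁻¹ ^ a k) * Φ u₀ := by
            rw [Finset.prod_mul_distrib, hΦdef]
        _ = (α⁻¹) ^ N * Φ u₀ := by
            rw [Finset.prod_pow_eq_pow_sum, hsum]
    have hαinv : α⁻¹ = Real.sqrt (1 + x₁) := by
      have h2 : (1 + x₁) * α ^ 2 = 1 := by linear_combination hx₁eq + hαβ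
      have h3 : (α⁻¹) ^ 2 = 1 + x₁ := by
        have hαne : α ≠ 0 := ne_of_gt hα
        have h2' := h2
        rw [hx₁def] at h2'
        field_simp
        linear_combination -h2'
      rw [← h3, Real.sqrt_sq (by positivity)]
    have hfinal : Real.sqrt (1+x₁) ^ N * Y ^ a m ≤ Real.sqrt (1+x₂) ^ N * ‖p‖ ^ a m := by
      have hFp' : ‖F p‖ = Real.sqrt (1+x₁) ^ N * Φ u₀ / ‖p‖ ^ a m := by
        rw [eq_div_iff (by positivity : (‖p‖:ℝ) ^ a m ≠ 0), ← hαinv]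
        exact hFp
      rw [hFp', div_le_div_iff₀ (by positivity) (by positivity)] at hMMP
      have h6 : (Real.sqrt (1+x₁) ^ N * Y ^ a m) * Φ u₀
          ≤ (Real.sqrt (1+x₂) ^ N * ‖p‖ ^ a m) * Φ u₀ := by
        calc (Real.sqrt (1+x₁) ^ N * Y ^ a m) * Φ u₀
            = Real.sqrt (1+x₁) ^ N * Φ u₀ * Y ^ a m := by ring
          _ ≤ Real.sqrt (1+x₂) ^ N * Φ u₀ * ‖p‖ ^ a m := hMMP
          _ = (Real.sqrt (1+x₂) ^ N * ‖p‖ ^ a m) * Φ u₀ := by ring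
      exact le_of_mul_le_mul_right h6 hΦ₀pos
    have hsqle : (1+x₁) ^ N * x₂ ^ a m ≤ (1+x₂) ^ N * x₁ ^ a m := by
      have hAnn : (0:ℝ) ≤ Real.sqrt (1+x₁) ^ N * Y ^ a m := by positivity
      have h := mul_self_le_mul_self hAnn hfinal
      have eA : (Real.sqrt (1+x₁) ^ N * Y ^ a m) * (Real.sqrt (1+x₁) ^ N * Y ^ a m)
          = (1+x₁) ^ N * x₂ ^ a m := by
        rw [show ∀ s t : ℝ, (s*t)*(s*t) = (s*s)*(t*t) from fun s t => by ring,
          ← mul_pow, ← mul_pow, Real.mul_self_sqrt (by positivity),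
          Real.mul_self_sqrt hx₂pos.le]
      have eB : (Real.sqrt (1+x₂) ^ N * ‖p‖ ^ a m) * (Real.sqrt (1+x₂) ^ N * ‖p‖ ^ a m)
          = (1+x₂) ^ N * x₁ ^ a m := by
        rw [show ∀ s t : ℝ, (s*t)*(s*t) = (s*s)*(t*t) from fun s t => by ring,
          ← mul_pow, ← mul_pow, Real.mul_self_sqrt (by positivity), hx₁def]
        ring
      rw [eA, eB] at h
      exact h
    have hmono := plank_core_mono ham hamN hx₁pos hx₁₂ hx₂rel
    linarith

/-- **Ball's complex plank theorem.** If `v 0, …, v (n-1)` are unit vectors in `ℂ^d` and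
`t 0, …, t (n-1)` are non-negative reals with `∑ k, t k ^ 2 = 1`, then there is a unit
vector `u` with `|⟨v k, u⟩| ≥ t k` for every `k`. -/
theorem complex_plank_theorem (n d : ℕ) (v : Fin n → EuclideanSpace ℂ (Fin d))
    (hv : ∀ k, ‖v k‖ = 1) (t : Fin n → ℝ) (ht : ∀ k, 0 ≤ t k)
    (htsum : ∑ k, t k ^ 2 = 1) :
    ∃ u : EuclideanSpace ℂ (Fin d), ‖u‖ = 1 ∧ ∀ k, t k ≤ ‖(inner ℂ (v k) u : ℂ)‖ := by
  have hn : n ≠ 0 := by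
    rintro rfl
    simp at htsum
  obtain ⟨k₀, -⟩ : ∃ k : Fin n, True := ⟨⟨0, Nat.pos_of_ne_zero hn⟩, trivial⟩
  have main : ∀ M : ℕ, ∃ u : EuclideanSpace ℂ (Fin d), ‖u‖ = 1 ∧
      ∀ k, t k ^ 2 - 1/((M:ℝ)+1) ≤ ‖(inner ℂ (v k) u : ℂ)‖ ^ 2 := by
    intro M
    set N : ℕ := M + 1 with hNdef
    have hNR : ((N:ℕ):ℝ) = (M:ℝ) + 1 := by rw [hNdef]; push_cast; ring
    have hNpos : (0:ℝ) < (N:ℝ) := by rw [hNR]; positivity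
    set S : ℕ := ∑ j ∈ Finset.univ.erase k₀, ⌊t j ^ 2 * N⌋₊ with hSdef
    have htk2 : ∀ j : Fin n, (0:ℝ) ≤ t j ^ 2 * N := fun j => by positivity
    have hSle : (S:ℝ) ≤ ∑ j ∈ Finset.univ.erase k₀, t j ^ 2 * N := by
      rw [hSdef, Nat.cast_sum]
      exact Finset.sum_le_sum (fun j _ => Nat.floor_le (htk2 j))
    have hsum_erase : ∑ j ∈ Finset.univ.erase k₀, t j ^ 2 = 1 - t k₀ ^ 2 := by
      have h := Finset.add_sum_erase Finset.univ (fun k => t k ^ 2) (Finset.mem_univ k₀)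
      linarith [htsum, h]
    have hSleN : (S:ℝ) ≤ (1 - t k₀ ^ 2) * N := by
      calc (S:ℝ) ≤ ∑ j ∈ Finset.univ.erase k₀, t j ^ 2 * N := hSle
        _ = (1 - t k₀ ^ 2) * N := by rw [← Finset.sum_mul, hsum_erase]
    have hSN : S ≤ N := by
      have h1 : (S:ℝ) ≤ (N:ℝ) := le_trans hSleN (by nlinarith [sq_nonneg (t k₀)])
      exact_mod_cast h1
    set a : Fin n → ℕ := fun k => if k = k₀ then N - S else ⌊t k ^ 2 * N⌋₊ with hadef
    have hasum : ∑ k, a k = N := by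
      rw [← Finset.add_sum_erase Finset.univ a (Finset.mem_univ k₀)]
      have h1 : a k₀ = N - S := by rw [hadef]; simp
      have h2 : ∑ j ∈ Finset.univ.erase k₀, a j = S := by
        rw [hSdef]
        apply Finset.sum_congr rfl
        intro j hj
        rw [hadef]
        simp [(Finset.mem_erase.1 hj).1]
      rw [h1, h2]
      omega
    obtain ⟨u, hu1, hu2⟩ := plank_rational v hv a N (by omega) hasum k₀
    refine ⟨u, hu1, ?_⟩
    intro k
    refine le_trans ?_ (hu2 k)
    rw [← hNR]
    by_cases hk : k = k₀
    · subst hk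
      have h3 : ((a k : ℕ):ℝ) = (N:ℝ) - S := by
        have h3' : a k = N - S := by rw [hadef]; simp
        rw [h3', Nat.cast_sub hSN]
      rw [h3, le_div_iff₀ hNpos]
      have hNne : (N:ℝ) ≠ 0 := ne_of_gt hNpos
      calc (t k ^ 2 - 1/(N:ℝ)) * N = t k ^ 2 * N - 1 := by field_simp
        _ ≤ (N:ℝ) - S := by nlinarith [hSleN]
    · have h3 : ((a k : ℕ):ℝ) = (⌊t k ^ 2 * N⌋₊:ℝ) := by
        have h3' : a k = ⌊t k ^ 2 * N⌋₊ := by rw [hadef]; simp [hk]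
        rw [h3']
      have h5 : t k ^ 2 * N - 1 < (⌊t k ^ 2 * N⌋₊:ℝ) := by
        have := Nat.lt_floor_add_one (t k ^ 2 * N)
        linarith
      rw [h3, le_div_iff₀ hNpos]
      have hNne : (N:ℝ) ≠ 0 := ne_of_gt hNpos
      calc (t k ^ 2 - 1/(N:ℝ)) * N = t k ^ 2 * N - 1 := by field_simp
        _ ≤ (⌊t k ^ 2 * N⌋₊:ℝ) := by linarith [h5]
  choose seq hseq1 hseq2 using main
  have hmem : ∀ M, seq M ∈ sphere (0 : EuclideanSpace ℂ (Fin d)) 1 :=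
    fun M => mem_sphere_zero_iff_norm.2 (hseq1 M)
  obtain ⟨u, hus, φ, hφ, hconv⟩ :=
    (isCompact_sphere (0 : EuclideanSpace ℂ (Fin d)) 1).tendsto_subseq hmem
  refine ⟨u, mem_sphere_zero_iff_norm.1 hus, ?_⟩
  intro k
  have hcont : Continuous fun x : EuclideanSpace ℂ (Fin d) => ‖(inner ℂ (v k) x : ℂ)‖ ^ 2 :=
    ((Continuous.inner continuous_const continuous_id).norm).pow 2
  have h1 : Filter.Tendsto (fun j => ‖(inner ℂ (v k) (seq (φ j)) : ℂ)‖ ^ 2) Filter.atTop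
      (nhds (‖(inner ℂ (v k) u : ℂ)‖ ^ 2)) := (hcont.tendsto u).comp hconv
  have h2 : Filter.Tendsto (fun j => t k ^ 2 - 1/((φ j : ℝ)+1)) Filter.atTop
      (nhds (t k ^ 2 - 0)) := by
    apply Filter.Tendsto.const_sub
    exact tendsto_one_div_add_atTop_nhds_zero_nat.comp hφ.tendsto_atTop
  have h3 : t k ^ 2 - 0 ≤ ‖(inner ℂ (v k) u : ℂ)‖ ^ 2 :=
    le_of_tendsto_of_tendsto' h2 h1 (fun j => hseq2 (φ j) k)
  have h4 : t k ^ 2 ≤ ‖(inner ℂ (v k) u : ℂ)‖ ^ 2 := by linarith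
  calc t k = Real.sqrt (t k ^ 2) := (Real.sqrt_sq (ht k)).symm
    _ ≤ Real.sqrt (‖(inner ℂ (v k) u : ℂ)‖ ^ 2) := Real.sqrt_le_sqrt h4
    _ = _ := Real.sqrt_sq (norm_nonneg _)
end

section
/- Let v_1, …, v_n be unit vectors in ℂ^d with d ≥ 1. If u is a unit vector that maximizes the product ∏_{k=1}^n |⟨v_k, v⟩| over all unit vectors v in ℂ^d, then |⟨v_k, u⟩| ≥ 1/√n for every k = 1, …, n. -/
open Finset Metric Polynomial

/-- The function `x ↦ (1+x)^n / x` is strictly decreasing on `(0, 1/(n-1)]`. -/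
private lemma anti_aux {n : ℕ} (hn : 2 ≤ n) {a b : ℝ} (ha : 0 < a) (hab : a < b)
    (hb1 : b * ((n : ℝ) - 1) ≤ 1) : (1 + b) ^ n * a < (1 + a) ^ n * b := by
  have hb : 0 < b := ha.trans hab
  have hmono : StrictAntiOn (fun x : ℝ => (1 + x) ^ n / x) (Set.Icc a b) := by
    apply strictAntiOn_of_deriv_neg (convex_Icc a b)
    · apply ContinuousOn.div
      · exact ((continuous_const.add continuous_id).pow n).continuousOn
      · exact continuousOn_id
      · intro x hx
        exact ne_of_gt (lt_of_lt_of_le ha hx.1)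
    · intro x hx
      rw [interior_Icc] at hx
      have hx0 : 0 < x := ha.trans hx.1
      have h1 : HasDerivAt (fun y : ℝ => (1 + y) ^ n) ((n : ℝ) * (1 + x) ^ (n - 1) * 1) x :=
        ((hasDerivAt_id x).const_add 1).pow n
      have h2 : HasDerivAt (fun y : ℝ => (1 + y) ^ n / y)
          (((n : ℝ) * (1 + x) ^ (n - 1) * 1 * x - (1 + x) ^ n * 1) / x ^ 2) x :=
        h1.div (hasDerivAt_id x) (ne_of_gt hx0)
      rw [h2.deriv]
      apply div_neg_of_neg_of_pos _ (by positivity)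
      have hxx : (1 + x) ^ n = (1 + x) ^ (n - 1) * (1 + x) := by
        conv_lhs => rw [show n = (n - 1) + 1 by omega]
        rw [pow_succ]
      have hp : (0 : ℝ) < (1 + x) ^ (n - 1) := by positivity
      have hfac : (n : ℝ) * x - (1 + x) < 0 := by nlinarith [hx.2, hb1, hx0]
      calc (n : ℝ) * (1 + x) ^ (n - 1) * 1 * x - (1 + x) ^ n * 1
          = (1 + x) ^ (n - 1) * ((n : ℝ) * x - (1 + x)) := by rw [hxx]; ring
        _ < 0 := mul_neg_of_pos_of_neg hp hfac
  have hlt := hmono (Set.left_mem_Icc.mpr hab.le) (Set.right_mem_Icc.mpr hab.le) hab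
  rw [div_lt_div_iff₀ hb ha] at hlt
  linarith

/-- There is a unit vector not orthogonal to any of the `v k`. -/
private lemma exists_unit_inner_ne (n d : ℕ) (hd : 1 ≤ d)
    (v : Fin n → EuclideanSpace ℂ (Fin d)) (hv : ∀ k, ‖v k‖ = 1) :
    ∃ w : EuclideanSpace ℂ (Fin d), ‖w‖ = 1 ∧ ∀ k, (inner ℂ (v k) w : ℂ) ≠ 0 := by
  have key : ∀ S : Finset (Fin n), ∃ w : EuclideanSpace ℂ (Fin d),
      w ≠ 0 ∧ ∀ k ∈ S, (inner ℂ (v k) w : ℂ) ≠ 0 := by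
    intro S
    induction S using Finset.induction_on with
    | empty =>
      refine ⟨EuclideanSpace.single ⟨0, hd⟩ (1 : ℂ), ?_, by simp⟩
      intro h
      have h1 : ‖EuclideanSpace.single (⟨0, hd⟩ : Fin d) (1 : ℂ)‖ = 1 := by
        rw [EuclideanSpace.norm_single]; simp
      rw [h] at h1
      simp at h1
    | insert k S hk ih =>
      obtain ⟨w, hw0, hwS⟩ := ih
      obtain ⟨z, hz⟩ := Infinite.exists_notMem_finset
        ((insert k S).image (fun l => -(inner ℂ (v l) w : ℂ) / (inner ℂ (v l) (v k) : ℂ)))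
      have hvkk : (inner ℂ (v k) (v k) : ℂ) = 1 := by
        rw [inner_self_eq_norm_sq_to_K, hv k]
        norm_num
      have hgood : ∀ l ∈ insert k S, (inner ℂ (v l) (w + z • v k) : ℂ) ≠ 0 := by
        intro l hl hEq
        rw [inner_add_right, inner_smul_right] at hEq
        by_cases hb : (inner ℂ (v l) (v k) : ℂ) = 0
        · rcases Finset.mem_insert.mp hl with rfl | hlS
          · exact one_ne_zero (hvkk ▸ hb)
          · exact hwS l hlS (by simpa [hb] using hEq)
        · apply hz
          rw [Finset.mem_image]
          refine ⟨l, hl, ?_⟩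
          rw [div_eq_iff hb]
          linear_combination -hEq
      refine ⟨w + z • v k, ?_, hgood⟩
      intro h0
      apply hgood k (Finset.mem_insert_self k S)
      rw [h0, inner_zero_right]
  obtain ⟨w, hw0, hw⟩ := key Finset.univ
  have hnw : (0 : ℝ) < ‖w‖ := norm_pos_iff.mpr hw0
  refine ⟨((‖w‖ : ℂ))⁻¹ • w, ?_, ?_⟩
  · rw [norm_smul, norm_inv, Complex.norm_real, Real.norm_eq_abs, abs_of_pos hnw,
      inv_mul_cancel₀ (ne_of_gt hnw)]
  · intro k
    rw [inner_smul_right]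
    apply mul_ne_zero
    · simpa using ne_of_gt hnw
    · exact hw k (Finset.mem_univ k)

set_option maxHeartbeats 2000000 in
/-- Equal-width case of the complex plank theorem, as a property of maximizers: if a unit
vector `u` maximizes `∏ k, |⟨v k, v⟩|` over unit vectors `v`, then `|⟨v k, u⟩| ≥ 1/√n`
for every `k`. -/
theorem maximizer_ge_one_div_sqrt (n d : ℕ) (hd : 1 ≤ d)
    (v : Fin n → EuclideanSpace ℂ (Fin d)) (hv : ∀ k, ‖v k‖ = 1)
    (u : EuclideanSpace ℂ (Fin d)) (hu : ‖u‖ = 1)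
    (hmax : ∀ w : EuclideanSpace ℂ (Fin d), ‖w‖ = 1 →
      ∏ k, ‖(inner ℂ (v k) w : ℂ)‖ ≤ ∏ k, ‖(inner ℂ (v k) u : ℂ)‖) :
    ∀ k, 1 / Real.sqrt n ≤ ‖(inner ℂ (v k) u : ℂ)‖ := by
  intro j
  have hn1 : 1 ≤ n := by have := j.isLt; omega
  rcases eq_or_lt_of_le hn1 with hn1' | hn2
  · -- case n = 1
    subst hn1'
    have hj : j = 0 := Subsingleton.elim j 0
    subst hj
    have hvjj1 : (inner ℂ (v 0) (v 0) : ℂ) = 1 := by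
      rw [inner_self_eq_norm_sq_to_K, hv 0]
      norm_num
    have h := hmax (v 0) (hv 0)
    rw [Fin.prod_univ_one, Fin.prod_univ_one, hvjj1, norm_one] at h
    have hsq1 : Real.sqrt ((1 : ℕ) : ℝ) = 1 := by norm_num
    rw [hsq1]
    linarith
  -- main case: 2 ≤ n
  have hn2' : 2 ≤ n := hn2
  have hnR : (1 : ℝ) ≤ (n : ℝ) - 1 := by
    have : (2 : ℝ) ≤ (n : ℝ) := by exact_mod_cast hn2'
    linarith
  set M : ℝ := ∏ k, ‖(inner ℂ (v k) u : ℂ)‖ with hM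
  obtain ⟨w₁, hw₁n, hw₁⟩ := exists_unit_inner_ne n d hd v hv
  have hMpos : 0 < M :=
    lt_of_lt_of_le (Finset.prod_pos fun k _ => norm_pos_iff.mpr (hw₁ k)) (hmax w₁ hw₁n)
  set a : ℂ := (inner ℂ (v j) u : ℂ) with ha
  set m : ℝ := ‖a‖ with hm
  have hmpos : 0 < m := by
    rcases (norm_nonneg a).eq_or_lt with h | h
    · exfalso
      have h0 : ‖(inner ℂ (v j) u : ℂ)‖ = 0 := h.symm
      exact (ne_of_gt hMpos) (hM.trans (Finset.prod_eq_zero (Finset.mem_univ j) h0))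
    · exact h
  have hmle : m ≤ 1 := by
    calc m ≤ ‖v j‖ * ‖u‖ := norm_inner_le_norm _ _
      _ = 1 := by rw [hv j, hu, one_mul]
  have hsqrtn : (1 : ℝ) ≤ Real.sqrt n := by
    rw [show (1 : ℝ) = Real.sqrt 1 from Real.sqrt_one.symm]
    exact Real.sqrt_le_sqrt (by exact_mod_cast hn1)
  by_cases hm1 : 1 ≤ m
  · have h01 : 1 / Real.sqrt n ≤ 1 := by
      rw [div_le_one (lt_of_lt_of_le one_pos hsqrtn)]
      exact hsqrtn
    linarith
  push_neg at hm1
  -- reduce the goal to `1/n ≤ m^2`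
  suffices hfin : 1 / (n : ℝ) ≤ m ^ 2 by
    have h1 : (1 : ℝ) / Real.sqrt n = Real.sqrt (1 / n) := by
      rw [one_div, one_div, Real.sqrt_inv]
    rw [← hm] at *
    rw [h1, show m = Real.sqrt (m ^ 2) from (Real.sqrt_sq hmpos.le).symm]
    exact Real.sqrt_le_sqrt hfin
  set s : ℝ := Real.sqrt (1 - m ^ 2) with hs
  have hs2 : s ^ 2 = 1 - m ^ 2 := Real.sq_sqrt (by nlinarith)
  have hspos : 0 < s := Real.sqrt_pos.mpr (by nlinarith)
  set x₀ : EuclideanSpace ℂ (Fin d) := ((s : ℂ))⁻¹ • (u - a • v j) with hx₀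
  have hvjj : (inner ℂ (v j) (v j) : ℂ) = 1 := by
    rw [inner_self_eq_norm_sq_to_K, hv j]
    norm_num
  have huvj : (inner ℂ u (v j) : ℂ) = starRingEnd ℂ a := by
    rw [← inner_conj_symm, ← ha]
  have hsub : ‖u - a • v j‖ = s := by
    have h2 : ‖u - a • v j‖ ^ 2 = 1 - m ^ 2 := by
      rw [norm_sub_sq (𝕜 := ℂ), inner_smul_right, huvj, Complex.mul_conj, hu, norm_smul, hv j]
      rw [RCLike.re_to_complex, Complex.ofReal_re]
      rw [Complex.normSq_eq_norm_sq, ← hm]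
      ring
    rw [show ‖u - a • v j‖ = Real.sqrt (‖u - a • v j‖ ^ 2) from
      (Real.sqrt_sq (norm_nonneg _)).symm, h2, ← hs]
  have hx₀n : ‖x₀‖ = 1 := by
    rw [hx₀, norm_smul, norm_inv, Complex.norm_real, Real.norm_eq_abs, abs_of_pos hspos, hsub,
      inv_mul_cancel₀ (ne_of_gt hspos)]
  have hcj : (inner ℂ (v j) x₀ : ℂ) = 0 := by
    rw [hx₀, inner_smul_right, inner_sub_right, inner_smul_right, hvjj, ← ha]
    ring
  have hcj' : (inner ℂ x₀ (v j) : ℂ) = 0 := by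
    rw [← inner_conj_symm, hcj]
    simp
  set c : Fin n → ℂ := fun k => (inner ℂ (v k) x₀ : ℂ) with hc
  set b : Fin n → ℂ := fun k => (inner ℂ (v k) (v j) : ℂ) with hb
  -- KEY inequality from maximality
  have KEY : ∀ z : ℂ, ∏ k, ‖c k + z * b k‖ ≤ M * Real.sqrt (1 + ‖z‖ ^ 2) ^ n := by
    intro z
    set q : ℝ := Real.sqrt (1 + ‖z‖ ^ 2) with hq
    have hqpos : 0 < q := Real.sqrt_pos.mpr (by positivity)
    have hq2 : q ^ 2 = 1 + ‖z‖ ^ 2 := Real.sq_sqrt (by positivity)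
    set W : EuclideanSpace ℂ (Fin d) := x₀ + z • v j with hW
    have hWn : ‖W‖ = q := by
      have h2 : ‖W‖ ^ 2 = 1 + ‖z‖ ^ 2 := by
        rw [hW, norm_add_sq (𝕜 := ℂ), inner_smul_right, hcj', hx₀n, norm_smul, hv j]
        simp
      rw [show ‖W‖ = Real.sqrt (‖W‖ ^ 2) from (Real.sqrt_sq (norm_nonneg _)).symm, h2, ← hq]
    have hwun : ‖((q : ℂ))⁻¹ • W‖ = 1 := by
      rw [norm_smul, norm_inv, Complex.norm_real, Real.norm_eq_abs, abs_of_pos hqpos, hWn,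
        inv_mul_cancel₀ (ne_of_gt hqpos)]
    have h := hmax _ hwun
    have hz_term : ∀ k : Fin n, (inner ℂ (v k) (z • v j) : ℂ) = z * b k := fun k =>
      inner_smul_right _ _ _
    have hinner : ∀ k : Fin n, (inner ℂ (v k) (((q : ℂ))⁻¹ • W) : ℂ)
        = ((q : ℂ))⁻¹ * (c k + z * b k) := by
      intro k
      rw [inner_smul_right]
      congr 1
      rw [hW, inner_add_right, hz_term k]
    have hps : ∀ k : Fin n, ‖(inner ℂ (v k) (((q : ℂ))⁻¹ • W) : ℂ)‖ = q⁻¹ * ‖c k + z * b k‖ := by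
      intro k
      rw [hinner k, norm_mul, norm_inv, Complex.norm_real, Real.norm_eq_abs, abs_of_pos hqpos]
    rw [Finset.prod_congr rfl fun k _ => hps k] at h
    rw [Finset.prod_mul_distrib, Finset.prod_const, Finset.card_univ, Fintype.card_fin,
      inv_pow] at h
    calc ∏ k, ‖c k + z * b k‖
        = q ^ n * ((q ^ n)⁻¹ * ∏ k, ‖c k + z * b k‖) := by
          rw [← mul_assoc, mul_inv_cancel₀ (by positivity), one_mul]
      _ ≤ q ^ n * M := mul_le_mul_of_nonneg_left h (by positivity)
      _ = M * q ^ n := mul_comm _ _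
  -- split off the factor j
  have hsplit : ∀ z : ℂ, ∏ k, ‖c k + z * b k‖
      = ‖z‖ * ∏ k ∈ Finset.univ.erase j, ‖c k + z * b k‖ := by
    intro z
    rw [← Finset.mul_prod_erase Finset.univ (fun k => ‖c k + z * b k‖) (Finset.mem_univ j)]
    congr 1
    show ‖(inner ℂ (v j) x₀ : ℂ) + z * (inner ℂ (v j) (v j) : ℂ)‖ = ‖z‖
    rw [hcj, hvjj]
    simp
  -- the polynomial given by the non-j factors
  set p : Polynomial ℂ := ∏ k ∈ Finset.univ.erase j, (C (c k) + C (b k) * X) with hp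
  have hpnorm : ∀ z : ℂ, ‖p.eval z‖ = ∏ k ∈ Finset.univ.erase j, ‖c k + z * b k‖ := by
    intro z
    rw [hp, Polynomial.eval_prod]
    rw [norm_prod]
    refine Finset.prod_congr rfl fun k _ => ?_
    rw [Polynomial.eval_add, Polynomial.eval_mul, Polynomial.eval_C, Polynomial.eval_C,
      Polynomial.eval_X, mul_comm (b k) z]
  -- value at z₀
  set z₀ : ℂ := a * ((s : ℂ))⁻¹ with hz₀
  set ρ : ℝ := m / s with hρ
  have hρpos : 0 < ρ := div_pos hmpos hspos
  have hz₀n : ‖z₀‖ = ρ := by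
    rw [hz₀, norm_mul, norm_inv, Complex.norm_real, Real.norm_eq_abs, abs_of_pos hspos, ← hm,
      hρ, div_eq_mul_inv]
  have hWz₀ : x₀ + z₀ • v j = ((s : ℂ))⁻¹ • u := by
    rw [hx₀, hz₀, smul_sub, smul_smul, mul_comm ((s : ℂ))⁻¹ a]
    abel
  have hQz₀ : ∀ k : Fin n, c k + z₀ * b k = ((s : ℂ))⁻¹ * (inner ℂ (v k) u : ℂ) := by
    intro k
    show (inner ℂ (v k) x₀ : ℂ) + z₀ * (inner ℂ (v k) (v j) : ℂ) = _
    rw [← inner_smul_right, ← inner_add_right, hWz₀, inner_smul_right]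
  have hprodz₀ : ∏ k, ‖c k + z₀ * b k‖ = (s⁻¹) ^ n * M := by
    have hps : ∀ k : Fin n, ‖c k + z₀ * b k‖ = s⁻¹ * ‖(inner ℂ (v k) u : ℂ)‖ := by
      intro k
      rw [hQz₀ k, norm_mul, norm_inv, Complex.norm_real, Real.norm_eq_abs, abs_of_pos hspos]
    rw [Finset.prod_congr rfl fun k _ => hps k]
    rw [Finset.prod_mul_distrib, Finset.prod_const, Finset.card_univ, Fintype.card_fin, hM]
  have hRz₀ : ρ * ‖p.eval z₀‖ = (s⁻¹) ^ n * M := by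
    rw [hpnorm, ← hz₀n, ← hsplit, hprodz₀]
  -- max modulus setup
  set t : ℝ := Real.sqrt (1 / ((n : ℝ) - 1)) with ht
  have htpos : 0 < t := Real.sqrt_pos.mpr (by positivity)
  have ht2 : t ^ 2 = 1 / ((n : ℝ) - 1) := Real.sq_sqrt (by positivity)
  by_contra hcon
  push_neg at hcon
  -- hcon : m ^ 2 < 1 / n ; derive ρ² < t²
  have hnpos : (0 : ℝ) < (n : ℝ) := by positivity
  have hmn : m ^ 2 * (n : ℝ) < 1 := by
    rw [lt_div_iff₀ hnpos] at hcon
    linarith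
  have hsm2 : (0:ℝ) < 1 - m ^ 2 := by nlinarith
  have hn1R : (0:ℝ) < (n : ℝ) - 1 := by linarith
  have hρt2 : ρ ^ 2 < t ^ 2 := by
    rw [ht2, hρ, div_pow, hs2]
    rw [div_lt_div_iff₀ hsm2 hn1R]
    have hexp : m ^ 2 * ((n:ℝ) - 1) = m ^ 2 * (n:ℝ) - m ^ 2 := by ring
    have hexp2 : (1:ℝ) * (1 - m ^ 2) = 1 - m ^ 2 := by ring
    linarith [hmn]
  have hρt : ρ < t := lt_of_pow_lt_pow_left₀ 2 htpos.le hρt2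
  -- frontier bound
  set qt : ℝ := Real.sqrt (1 + t ^ 2) with hqt
  have hqtpos : 0 < qt := Real.sqrt_pos.mpr (by positivity)
  have hqt2 : qt ^ 2 = 1 + t ^ 2 := Real.sq_sqrt (by positivity)
  have hfront : ∀ z ∈ frontier (ball (0 : ℂ) t), ‖p.eval z‖ ≤ M * qt ^ n / t := by
    intro z hz
    rw [frontier_ball (0 : ℂ) (ne_of_gt htpos)] at hz
    have hzn : ‖z‖ = t := by simpa using mem_sphere_zero_iff_norm.mp hz
    have hKz := KEY z
    rw [hsplit z, hzn, ← hpnorm, ← hqt] at hKz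
    rw [le_div_iff₀ htpos]
    linarith
  have hdiff : DiffContOnCl ℂ (fun z => p.eval z) (ball (0 : ℂ) t) :=
    p.differentiable.diffContOnCl
  have hz₀cl : z₀ ∈ closure (ball (0 : ℂ) t) := by
    rw [closure_ball (0 : ℂ) (ne_of_gt htpos), mem_closedBall_zero_iff, hz₀n]
    exact hρt.le
  have hmm := Complex.norm_le_of_forall_mem_frontier_norm_le isBounded_ball hdiff hfront hz₀cl
  -- combine
  have hsne : s ≠ 0 := ne_of_gt hspos
  have hs1ρ : (s⁻¹) ^ 2 = 1 + ρ ^ 2 := by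
    have key : 1 + (m / s) ^ 2 = (s ^ 2 + m ^ 2) / s ^ 2 := by
      field_simp
    have hsm1 : s ^ 2 + m ^ 2 = 1 := by linarith [hs2]
    rw [hρ, key, hsm1, inv_pow, one_div]
  have hanti : (1 + t ^ 2) ^ n * ρ ^ 2 < (1 + ρ ^ 2) ^ n * t ^ 2 := by
    apply anti_aux hn2' (by positivity) hρt2
    rw [ht2, div_mul_cancel₀ (1:ℝ) (ne_of_gt hn1R)]
  have hsq : (qt ^ n * ρ) ^ 2 < ((s⁻¹) ^ n * t) ^ 2 := by
    calc (qt ^ n * ρ) ^ 2 = (qt ^ 2) ^ n * ρ ^ 2 := by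
          rw [mul_pow, ← pow_mul, mul_comm n 2, pow_mul]
      _ = (1 + t ^ 2) ^ n * ρ ^ 2 := by rw [hqt2]
      _ < (1 + ρ ^ 2) ^ n * t ^ 2 := hanti
      _ = ((s⁻¹) ^ 2) ^ n * t ^ 2 := by rw [hs1ρ]
      _ = ((s⁻¹) ^ n * t) ^ 2 := by rw [mul_pow, ← pow_mul, mul_comm 2 n, pow_mul]
  have hlt : qt ^ n * ρ < (s⁻¹) ^ n * t :=
    lt_of_pow_lt_pow_left₀ 2 (by positivity) hsq
  have h1 : (s⁻¹) ^ n * M ≤ ρ * (M * qt ^ n / t) := by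
    rw [← hRz₀]
    exact mul_le_mul_of_nonneg_left hmm hρpos.le
  have h2 : (s⁻¹) ^ n * M * t ≤ M * (qt ^ n * ρ) := by
    have h2' := mul_le_mul_of_nonneg_right h1 htpos.le
    calc (s⁻¹) ^ n * M * t ≤ ρ * (M * qt ^ n / t) * t := h2'
      _ = M * (qt ^ n * ρ) := by field_simp
  have h3 : M * (qt ^ n * ρ) < M * ((s⁻¹) ^ n * t) := mul_lt_mul_of_pos_left hlt hMpos
  have h4 : M * ((s⁻¹) ^ n * t) = (s⁻¹) ^ n * M * t := by ring
  linarith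
end

section
/- Let v_1, …, v_n be unit vectors in ℂ^d with d ≥ 1. Then there exists a unit vector v in ℂ^d such that |⟨v_k, v⟩| ≥ 1/√n for every k = 1, …, n. -/
noncomputable section

open scoped ComplexConjugate

namespace PlankHelpers

/-- Strict Bernoulli inequality. -/
lemma bernoulli_strict (u : ℝ) (hu : -1 < u) (hu0 : u ≠ 0) :
    ∀ m : ℕ, 2 ≤ m → 1 + (m : ℝ) * u < (1 + u) ^ m := by
  intro m hm
  induction m with
  | zero => omega
  | succ k ih =>
    rcases Nat.lt_or_ge k 2 with hk | hk
    · interval_cases k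
      · omega
      · -- m = 2
        have hsq : u ^ 2 > 0 := by positivity
        push_cast
        nlinarith
    · have hk' := ih hk
      have h1u : (0:ℝ) < 1 + u := by linarith
      have : (1 + (k:ℝ) * u) * (1 + u) < (1 + u) ^ k * (1 + u) :=
        mul_lt_mul_of_pos_right hk' h1u
      have hku : (0:ℝ) < (k:ℝ) * u ^ 2 := by
        have hk0 : (0:ℝ) < (k:ℝ) := by positivity
        have hu2 : (0:ℝ) < u^2 := by positivity
        positivity
      calc 1 + ((k+1 : ℕ) : ℝ) * u = (1 + (k:ℝ) * u) * (1 + u) - (k:ℝ) * u^2 := by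
            push_cast; ring
        _ < (1 + (k:ℝ)*u) * (1+u) := by linarith
        _ < (1+u)^k * (1+u) := this
        _ = (1+u)^(k+1) := by ring

/-- The key monotonicity inequality: for `0 < x < c = 1/(n-1)`,
`x * (1+c)^n < c * (1+x)^n`. -/
lemma key_ineq (n : ℕ) (hn : 2 ≤ n) {x c : ℝ} (hc : c = 1 / ((n : ℝ) - 1))
    (hx : 0 < x) (hxc : x < c) : x * (1 + c) ^ n < c * (1 + x) ^ n := by
  have hn1 : (1:ℝ) ≤ (n:ℝ) - 1 := by
    have : (2:ℝ) ≤ (n:ℝ) := by exact_mod_cast hn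
    linarith
  have hn1' : ((n:ℝ) - 1) ≠ 0 := by linarith
  have hc0 : 0 < c := by rw [hc]; positivity
  have hcn : c * n = 1 + c := by
    rw [hc]; field_simp; ring
  set u : ℝ := (x - c) / (1 + c) with hu
  have h1c : (0:ℝ) < 1 + c := by linarith
  have h1u : 1 + u = (1 + x)/(1 + c) := by rw [hu]; field_simp; ring
  have h1u0 : (0:ℝ) < 1 + u := by rw [h1u]; positivity
  have hu1 : -1 < u := by linarith
  have hu0 : u ≠ 0 := by
    rw [hu]
    intro h
    rcases div_eq_zero_iff.mp h with h' | h'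
    · linarith
    · linarith
  have hb := bernoulli_strict u hu1 hu0 n hn
  have hpow : (1 + x)^n = (1 + c)^n * (1 + u)^n := by
    rw [h1u, div_pow]; field_simp
  have hcu : c * (1 + (n:ℝ) * u) = x := by
    rw [hu]
    field_simp
    nlinarith [hcn]
  have hpos : (0:ℝ) < (1+c)^n := by positivity
  calc x * (1+c)^n = (1+c)^n * (c * (1 + (n:ℝ)*u)) := by rw [hcu]; ring
    _ < (1+c)^n * (c * (1+u)^n) := by
        apply mul_lt_mul_of_pos_left _ hpos
        exact mul_lt_mul_of_pos_left hb hc0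
    _ = c * (1+x)^n := by rw [hpow]; ring

/-- Fubini-Study type identity in ℂ. -/
lemma fs_identity (b : ℝ) (ζ : ℂ) :
    ‖1 + (b:ℂ) * ζ‖^2 + ‖(b:ℂ) - ζ‖^2 = (1 + b^2) * (1 + ‖ζ‖^2) := by
  have h1 : ‖1 + (b:ℂ) * ζ‖^2 = Complex.normSq (1 + (b:ℂ)*ζ) := by
    rw [Complex.sq_norm]
  have h2 : ‖(b:ℂ) - ζ‖^2 = Complex.normSq ((b:ℂ) - ζ) := by
    rw [Complex.sq_norm]
  have h3 : ‖ζ‖^2 = Complex.normSq ζ := by rw [Complex.sq_norm]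
  rw [h1, h2, h3]
  simp only [Complex.normSq_apply, Complex.add_re, Complex.add_im, Complex.mul_re,
    Complex.mul_im, Complex.sub_re, Complex.sub_im, Complex.one_re, Complex.one_im,
    Complex.ofReal_re, Complex.ofReal_im]
  ring

/-- Core analytic lemma (Schwarz-lemma argument after a sphere rotation). -/
lemma plank_core (n : ℕ) (hn : 2 ≤ n) (M : ℝ) (hM : 0 < M) (α β : Fin n → ℂ)
    (b : ℝ) (hb0 : b ≠ 0) (hbc : b ^ 2 < 1 / ((n:ℝ) - 1))
    (hval : ∏ j, ‖α j‖ = M)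
    (hroot : ∃ k, α k + (b:ℂ) * β k = 0)
    (hyp : ∀ ζ : ℂ, ∏ j, ‖α j + ζ * β j‖^2 ≤ M^2 * (1 + ‖ζ‖^2)^n) : False := by
  have hn1 : (1:ℝ) ≤ (n:ℝ) - 1 := by
    have : (2:ℝ) ≤ (n:ℝ) := by exact_mod_cast hn
    linarith
  set c : ℝ := 1 / ((n:ℝ) - 1) with hc
  have hc0 : 0 < c := by rw [hc]; positivity
  have hc1 : c ≤ 1 := by
    rw [hc]
    rw [div_le_one (by linarith)]
    linarith
  set R : ℝ := Real.sqrt c with hRdef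
  have hR2 : R^2 = c := Real.sq_sqrt hc0.le
  have hR0 : 0 < R := Real.sqrt_pos.mpr hc0
  set x : ℝ := b^2 with hxdef
  have hx0 : 0 < x := by positivity
  have hxc : x < c := hbc
  have habs : |b| < R := by
    have h := Real.sqrt_lt_sqrt (by positivity : (0:ℝ) ≤ b^2) hxc
    rwa [Real.sqrt_sq_eq_abs] at h
  -- the rotated polynomial
  set q : Polynomial ℂ :=
    ∏ j, (Polynomial.C (α j) * (1 + Polynomial.C (b:ℂ) * Polynomial.X)
      + Polynomial.C (β j) * (Polynomial.C (b:ℂ) - Polynomial.X)) with hqdef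
  have hqeval : ∀ ζ : ℂ,
      q.eval ζ = ∏ j, (α j * (1 + (b:ℂ)*ζ) + β j * ((b:ℂ) - ζ)) := by
    intro ζ
    rw [hqdef, Polynomial.eval_prod]
    simp
  obtain ⟨k, hk⟩ := hroot
  have hq0 : q.eval 0 = 0 := by
    rw [hqeval]
    apply Finset.prod_eq_zero (Finset.mem_univ k)
    have : α k * (1 + (b:ℂ)*0) + β k * ((b:ℂ) - 0) = α k + (b:ℂ) * β k := by ring
    rw [this, hk]
  obtain ⟨q₁, hq1⟩ : (Polynomial.X : Polynomial ℂ) ∣ q :=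
    Polynomial.X_dvd_iff.mpr (by rwa [Polynomial.coeff_zero_eq_eval_zero])
  have hCnn : (0:ℝ) ≤ M^2 * ((1+x)*(1+c))^n := by positivity
  set C : ℝ := Real.sqrt (M^2 * ((1+x)*(1+c))^n) with hCdef
  have hC2 : C^2 = M^2 * ((1+x)*(1+c))^n := Real.sq_sqrt hCnn
  have hC0 : 0 ≤ C := Real.sqrt_nonneg _
  -- bound on the sphere of radius R
  have hsphere : ∀ ζ : ℂ, ‖ζ‖ = R → ‖q.eval ζ‖ ≤ C := by
    intro ζ hζ
    have hbz : ‖(b:ℂ) * ζ‖ < 1 := by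
      rw [norm_mul, Complex.norm_real, hζ]
      calc |b| * R < R * R := by
            exact mul_lt_mul_of_pos_right habs hR0
        _ = c := by rw [← hR2]; ring
        _ ≤ 1 := hc1
    have hs0 : (1 : ℂ) + (b:ℂ)*ζ ≠ 0 := by
      intro h
      have : (b:ℂ)*ζ = -1 := by linear_combination h
      rw [this] at hbz
      simp at hbz
    set s : ℂ := 1 + (b:ℂ)*ζ with hsdef
    set w : ℂ := ((b:ℂ) - ζ) / s with hwdef
    have hns : ‖s‖ ≠ 0 := norm_ne_zero_iff.mpr hs0
    have hfac : ∀ j, α j * (1 + (b:ℂ)*ζ) + β j * ((b:ℂ) - ζ) = s * (α j + w * β j) := by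
      intro j
      rw [hwdef, hsdef]
      have hs0' : (1:ℂ) + (b:ℂ)*ζ ≠ 0 := hs0
      field_simp
    have hq2 : ‖q.eval ζ‖^2 = (‖s‖^2)^n * ∏ j, ‖α j + w * β j‖^2 := by
      rw [hqeval]
      rw [Finset.prod_congr rfl (fun j _ => hfac j)]
      rw [Finset.prod_mul_distrib, Finset.prod_const]
      rw [norm_mul, norm_pow, Finset.card_univ, Fintype.card_fin]
      rw [mul_pow, pow_right_comm, norm_prod, ← Finset.prod_pow]
    have hwnorm : ‖s‖ * ‖w‖ = ‖(b:ℂ) - ζ‖ := by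
      rw [hwdef, norm_div, ← mul_div_assoc, mul_div_cancel_left₀ _ hns]
    have hfs : ‖s‖^2 + ‖(b:ℂ) - ζ‖^2 = (1 + b^2)*(1 + ‖ζ‖^2) := by
      rw [hsdef]; exact fs_identity b ζ
    have hws : ‖s‖^2 * (1 + ‖w‖^2) = (1+x)*(1+c) := by
      calc ‖s‖^2 * (1+‖w‖^2) = ‖s‖^2 + (‖s‖*‖w‖)^2 := by ring
        _ = ‖s‖^2 + ‖(b:ℂ)-ζ‖^2 := by rw [hwnorm]
        _ = (1+b^2)*(1+‖ζ‖^2) := hfs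
        _ = (1+x)*(1+c) := by rw [hζ, hR2, hxdef]
    have hq3 : ‖q.eval ζ‖^2 ≤ M^2 * ((1+x)*(1+c))^n := by
      rw [hq2, ← hws]
      calc (‖s‖^2)^n * ∏ j, ‖α j + w * β j‖^2
          ≤ (‖s‖^2)^n * (M^2 * (1 + ‖w‖^2)^n) := by
            apply mul_le_mul_of_nonneg_left (hyp w) (by positivity)
        _ = M^2 * (‖s‖^2 * (1 + ‖w‖^2))^n := by rw [mul_pow]; ring
    calc ‖q.eval ζ‖ = Real.sqrt (‖q.eval ζ‖^2) := by
          rw [Real.sqrt_sq (norm_nonneg _)]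
      _ ≤ Real.sqrt (M^2 * ((1+x)*(1+c))^n) := Real.sqrt_le_sqrt hq3
  -- max modulus for q₁ on the ball of radius R
  have hq1bound : ∀ ζ ∈ frontier (Metric.ball (0:ℂ) R), ‖q₁.eval ζ‖ ≤ C / R := by
    intro ζ hζ
    rw [frontier_ball (0:ℂ) hR0.ne'] at hζ
    have hζR : ‖ζ‖ = R := by
      rwa [mem_sphere_zero_iff_norm] at hζ
    have hqs := hsphere ζ hζR
    have hfact : q.eval ζ = ζ * q₁.eval ζ := by rw [hq1]; simp
    rw [hfact, norm_mul, hζR] at hqs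
    rw [le_div_iff₀ hR0]
    linarith
  have hbmem : (b:ℂ) ∈ closure (Metric.ball (0:ℂ) R) := by
    rw [closure_ball (0:ℂ) hR0.ne']
    rw [Metric.mem_closedBall, dist_zero_right, Complex.norm_real]
    exact habs.le
  have hmax : ‖q₁.eval (b:ℂ)‖ ≤ C / R := by
    apply Complex.norm_le_of_forall_mem_frontier_norm_le Metric.isBounded_ball
      ((q₁.differentiable).diffContOnCl) hq1bound hbmem
  -- exact value at b
  have hvalb : ‖q.eval (b:ℂ)‖ = M * (1+x)^n := by
    rw [hqeval]
    have he : ∀ j, α j * (1 + (b:ℂ)*(b:ℂ)) + β j * ((b:ℂ) - (b:ℂ))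
        = α j * ((1:ℂ) + (b:ℂ)^2) := by intro j; ring
    rw [Finset.prod_congr rfl (fun j _ => he j)]
    rw [Finset.prod_mul_distrib, Finset.prod_const, Finset.card_univ, Fintype.card_fin]
    rw [norm_mul, norm_pow, norm_prod, hval]
    congr 1
    rw [show ((1:ℂ) + (b:ℂ)^2) = (((1 + b^2 : ℝ)):ℂ) by push_cast; ring]
    rw [Complex.norm_real, Real.norm_of_nonneg (by positivity : (0:ℝ) ≤ 1 + b^2), hxdef]
  -- combine
  have hqb : q.eval (b:ℂ) = (b:ℂ) * q₁.eval (b:ℂ) := by rw [hq1]; simp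
  have hchain : M * (1+x)^n ≤ |b| * (C/R) := by
    rw [← hvalb, hqb, norm_mul, Complex.norm_real]
    exact mul_le_mul_of_nonneg_left hmax (abs_nonneg b)
  have hsq : (M * (1+x)^n)^2 ≤ (|b| * (C/R))^2 := by
    apply pow_le_pow_left₀ (by positivity) hchain
  have hexp : (|b| * (C/R))^2 = x * (M^2 * ((1+x)^n*(1+c)^n)) / c := by
    rw [mul_pow, div_pow, sq_abs, hC2, hR2, ← hxdef, ← mul_pow]
    ring
  have hkey := key_ineq n hn hc hx0 hxc
  have hMp : (0:ℝ) < M^2 * (1+x)^n := by positivity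
  have h2 : x * (M^2 * ((1+x)^n * (1+c)^n)) < c * (M^2 * ((1+x)^n * (1+x)^n)) := by
    calc x * (M^2 * ((1+x)^n * (1+c)^n)) = (M^2 * (1+x)^n) * (x * (1+c)^n) := by ring
      _ < (M^2 * (1+x)^n) * (c * (1+x)^n) := by
          exact mul_lt_mul_of_pos_left hkey hMp
      _ = c * (M^2 * ((1+x)^n * (1+x)^n)) := by ring
  have h3 : (M * (1+x)^n)^2 = M^2 * ((1+x)^n * (1+x)^n) := by ring
  rw [h3, hexp] at hsq
  have hfin := (le_div_iff₀ hc0).mp hsq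
  linarith [h2, hfin]

end PlankHelpers

namespace PlankHelpers

variable {E : Type*} [NormedAddCommGroup E] [InnerProductSpace ℂ E]

lemma exists_unit_inner_ne [Nontrivial E] (n : ℕ) (v : Fin n → E) (hv : ∀ j, v j ≠ 0) :
    ∃ y : E, ‖y‖ = 1 ∧ ∀ j, (inner ℂ (v j) y : ℂ) ≠ 0 := by
  have key : ∀ S : Finset (Fin n), ∃ y : E, y ≠ 0 ∧ ∀ j ∈ S, (inner ℂ (v j) y : ℂ) ≠ 0 := by
    intro S
    induction S using Finset.induction with
    | empty =>
      obtain ⟨y, hy⟩ := exists_ne (0 : E)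
      exact ⟨y, hy, by simp⟩
    | @insert i S hiS ih =>
      obtain ⟨y, hy0, hyS⟩ := ih
      by_cases hiy : (inner ℂ (v i) y : ℂ) = 0
      · set B : Set ℝ := insert (0:ℝ)
          (⋃ j ∈ S, {t : ℝ | (inner ℂ (v j) y : ℂ) + (t:ℂ) * (inner ℂ (v j) (v i) : ℂ) = 0})
          with hB
        have hBfin : B.Finite := by
          apply Set.Finite.insert
          apply Set.Finite.biUnion S.finite_toSet
          intro j hj
          apply Set.Subsingleton.finite
          intro t₁ h₁ t₂ h₂
          simp only [Set.mem_setOf_eq] at h₁ h₂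
          by_cases hij : (inner ℂ (v j) (v i) : ℂ) = 0
          · exfalso
            rw [hij, mul_zero, add_zero] at h₁
            exact hyS j hj h₁
          · have hsub : ((t₁:ℂ) - t₂) * (inner ℂ (v j) (v i) : ℂ) = 0 := by
              linear_combination h₁ - h₂
            rcases mul_eq_zero.mp hsub with h | h
            · have : (t₁:ℂ) = t₂ := by linear_combination h
              exact_mod_cast this
            · exact absurd h hij
        obtain ⟨t, ht⟩ := hBfin.infinite_compl.nonempty
        rw [Set.mem_compl_iff] at ht
        have ht0 : t ≠ 0 := by
          intro h
          exact ht (by rw [h, hB]; exact Set.mem_insert _ _)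
        have htS : ∀ j ∈ S, (inner ℂ (v j) y : ℂ) + (t:ℂ) * (inner ℂ (v j) (v i) : ℂ) ≠ 0 := by
          intro j hj h
          apply ht
          rw [hB]
          exact Set.mem_insert_of_mem _ (Set.mem_biUnion hj h)
        have hanchor : (inner ℂ (v i) (y + (t:ℂ) • v i) : ℂ) ≠ 0 := by
          rw [inner_add_right, inner_smul_right, hiy, zero_add]
          exact mul_ne_zero (by exact_mod_cast ht0) (inner_self_ne_zero.mpr (hv i))
        refine ⟨y + (t:ℂ) • v i, ?_, ?_⟩
        · intro h
          rw [h, inner_zero_right] at hanchor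
          exact hanchor rfl
        · intro j hj
          rcases Finset.mem_insert.mp hj with rfl | hj
          · exact hanchor
          · rw [inner_add_right, inner_smul_right]
            exact htS j hj
      · refine ⟨y, hy0, ?_⟩
        intro j hj
        rcases Finset.mem_insert.mp hj with rfl | hj
        · exact hiy
        · exact hyS j hj
  obtain ⟨y, hy0, hall⟩ := key Finset.univ
  have hyn : (0:ℝ) < ‖y‖ := norm_pos_iff.mpr hy0
  refine ⟨((‖y‖⁻¹ : ℝ) : ℂ) • y, ?_, ?_⟩
  · rw [norm_smul, Complex.norm_real, Real.norm_of_nonneg (by positivity)]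
    field_simp
  · intro j
    rw [inner_smul_right]
    apply mul_ne_zero _ (hall j (Finset.mem_univ j))
    simp only [ne_eq, Complex.ofReal_eq_zero]
    positivity

end PlankHelpers

open PlankHelpers in
/-- Equal-weights special case of the complex plank theorem: for unit vectors
`v 0, …, v (n-1)` in `ℂ^d` (`d ≥ 1`) there exists a unit vector `u` with
`|⟨v k, u⟩| ≥ 1/√n` for every `k`. -/
theorem complex_plank_equal_weights (n d : ℕ) (hd : 1 ≤ d)
    (v : Fin n → EuclideanSpace ℂ (Fin d)) (hv : ∀ k, ‖v k‖ = 1) :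
    ∃ u : EuclideanSpace ℂ (Fin d), ‖u‖ = 1 ∧
      ∀ k, 1 / Real.sqrt n ≤ ‖(inner ℂ (v k) u : ℂ)‖ := by
  haveI : Nontrivial (EuclideanSpace ℂ (Fin d)) := by
    refine nontrivial_of_ne (EuclideanSpace.single ⟨0, hd⟩ (1:ℂ)) 0 ?_
    intro h
    have h1 : ‖EuclideanSpace.single (⟨0, hd⟩ : Fin d) (1:ℂ)‖ = 0 := by rw [h, norm_zero]
    rw [EuclideanSpace.norm_single] at h1
    simp at h1
  rcases Nat.eq_zero_or_pos n with rfl | hn0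
  · obtain ⟨y, hy⟩ := exists_ne (0 : EuclideanSpace ℂ (Fin d))
    have hyn : (0:ℝ) < ‖y‖ := norm_pos_iff.mpr hy
    refine ⟨((‖y‖⁻¹ : ℝ) : ℂ) • y, ?_, fun k => k.elim0⟩
    rw [norm_smul, Complex.norm_real, Real.norm_of_nonneg (by positivity)]
    field_simp
  have hvne : ∀ j, v j ≠ 0 := by
    intro j h
    have := hv j
    rw [h, norm_zero] at this
    exact one_ne_zero this.symm
  set F : EuclideanSpace ℂ (Fin d) → ℝ := fun u => ∏ j, ‖(inner ℂ (v j) u : ℂ)‖ with hF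
  have hFcont : Continuous F := by
    apply continuous_finset_prod
    intro j _
    exact (Continuous.inner continuous_const continuous_id).norm
  obtain ⟨y₀, hy₀norm, hy₀⟩ := exists_unit_inner_ne n v hvne
  have hy₀mem : y₀ ∈ Metric.sphere (0 : EuclideanSpace ℂ (Fin d)) 1 := by
    rwa [mem_sphere_zero_iff_norm]
  obtain ⟨u₀, hu₀mem, hu₀max⟩ :=
    (isCompact_sphere (0 : EuclideanSpace ℂ (Fin d)) 1).exists_isMaxOn ⟨y₀, hy₀mem⟩
      hFcont.continuousOn
  have hu₀norm : ‖u₀‖ = 1 := by rwa [mem_sphere_zero_iff_norm] at hu₀mem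
  set M : ℝ := F u₀ with hM
  have hMpos : 0 < M := by
    have h1 : 0 < F y₀ := by
      apply Finset.prod_pos
      intro j _
      exact norm_pos_iff.mpr (hy₀ j)
    exact lt_of_lt_of_le h1 (hu₀max hy₀mem)
  have homog : ∀ y : EuclideanSpace ℂ (Fin d),
      ∏ j, ‖(inner ℂ (v j) y : ℂ)‖ ≤ M * ‖y‖^n := by
    intro y
    rcases eq_or_ne y 0 with rfl | hy
    · have h1 : ∏ j, ‖(inner ℂ (v j) (0 : EuclideanSpace ℂ (Fin d)) : ℂ)‖ = 0 := by
        apply Finset.prod_eq_zero (Finset.mem_univ (⟨0, hn0⟩ : Fin n))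
        simp
      rw [h1, norm_zero, zero_pow hn0.ne', mul_zero]
    · have hyn : (0:ℝ) < ‖y‖ := norm_pos_iff.mpr hy
      set u₁ : EuclideanSpace ℂ (Fin d) := ((‖y‖⁻¹ : ℝ) : ℂ) • y with hu₁
      have hu₁mem : u₁ ∈ Metric.sphere (0 : EuclideanSpace ℂ (Fin d)) 1 := by
        rw [mem_sphere_zero_iff_norm, hu₁, norm_smul, Complex.norm_real,
          Real.norm_of_nonneg (by positivity)]
        field_simp
      have hle : F u₁ ≤ M := hu₀max hu₁mem
      have hFu₁ : F u₁ = (‖y‖⁻¹)^n * ∏ j, ‖(inner ℂ (v j) y : ℂ)‖ := by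
        rw [hF]
        simp only [hu₁, inner_smul_right, norm_mul, Complex.norm_real,
          Real.norm_of_nonneg (le_of_lt (by positivity : (0:ℝ) < ‖y‖⁻¹))]
        rw [Finset.prod_mul_distrib, Finset.prod_const, Finset.card_univ, Fintype.card_fin]
      rw [hFu₁] at hle
      have h2 : (‖y‖⁻¹)^n * ∏ j, ‖(inner ℂ (v j) y : ℂ)‖ ≤ M := hle
      have h3 : (0:ℝ) < (‖y‖)^n := by positivity
      calc ∏ j, ‖(inner ℂ (v j) y : ℂ)‖
          = ((‖y‖⁻¹)^n * ∏ j, ‖(inner ℂ (v j) y : ℂ)‖) * ‖y‖^n := by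
            rw [mul_comm, ← mul_assoc, inv_pow, mul_inv_cancel₀ h3.ne', one_mul]
        _ ≤ M * ‖y‖^n := by
            exact mul_le_mul_of_nonneg_right h2 h3.le
  refine ⟨u₀, hu₀norm, fun k => ?_⟩
  by_contra hcon
  push_neg at hcon
  set a : ℂ := (inner ℂ (v k) u₀ : ℂ) with ha
  have hapos : a ≠ 0 := by
    intro h
    have hM0 : M = 0 := by
      rw [hM, hF]
      exact Finset.prod_eq_zero (Finset.mem_univ k) (by rw [← ha, h, norm_zero])
    exact hMpos.ne' hM0
  have hna : (0:ℝ) < ‖a‖ := norm_pos_iff.mpr hapos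
  rcases Nat.lt_or_ge n 2 with hn1 | hn2
  · -- n = 1
    have hn1' : n = 1 := by omega
    subst hn1'
    have hk0 : k = 0 := Subsingleton.elim k 0
    have hvmem : v 0 ∈ Metric.sphere (0 : EuclideanSpace ℂ (Fin d)) 1 := by
      rw [mem_sphere_zero_iff_norm]; exact hv 0
    have h1 : F (v 0) ≤ F u₀ := hu₀max hvmem
    have h2 : F (v 0) = 1 := by
      simp only [hF, Fin.prod_univ_one]
      rw [inner_self_eq_norm_sq_to_K, hv 0]
      norm_num
    rw [hk0] at ha
    have h3 : F u₀ = ‖a‖ := by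
      simp only [hF, Fin.prod_univ_one]
      rw [ha]
    have h4 : (1:ℝ) ≤ ‖a‖ := by rw [← h3, ← h2]; exact h1
    rw [show ((1:ℕ):ℝ) = 1 by norm_num, Real.sqrt_one, div_one] at hcon
    linarith
  · -- main case n ≥ 2
    set x : ℝ := ‖a‖^2 with hx
    have hx0 : (0:ℝ) < x := by rw [hx]; exact pow_pos hna 2
    have hnR : (0:ℝ) < (n:ℝ) := by exact_mod_cast hn0
    have hsn : (0:ℝ) < Real.sqrt n := Real.sqrt_pos.mpr hnR
    have hxn : x < 1/(n:ℝ) := by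
      have h2 : ‖a‖^2 < (1/Real.sqrt n)^2 := by
        apply pow_lt_pow_left₀ hcon (norm_nonneg a)
        norm_num
      rwa [div_pow, one_pow, Real.sq_sqrt (by positivity : (0:ℝ) ≤ (n:ℝ))] at h2
    have hn2' : (2:ℝ) ≤ (n:ℝ) := by exact_mod_cast hn2
    have hx1 : x < 1 := by
      have : 1/(n:ℝ) ≤ 1 := by
        rw [div_le_one (by linarith)]; linarith
      linarith
    set T : ℝ := (1 - x)/x with hT
    have hT0 : 0 < T := by rw [hT]; exact div_pos (by linarith) hx0
    have hTgt : (n:ℝ) - 1 < T := by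
      have hnx : (n:ℝ) * x < 1 := by
        calc (n:ℝ) * x < (n:ℝ) * (1/(n:ℝ)) := by
              exact mul_lt_mul_of_pos_left hxn hnR
          _ = 1 := by field_simp
      rw [hT, lt_div_iff₀ hx0]
      nlinarith
    set st : ℝ := Real.sqrt T with hst
    have hst0 : 0 < st := Real.sqrt_pos.mpr hT0
    have hstsq : st * st = T := Real.mul_self_sqrt hT0.le
    set b : ℝ := -st⁻¹ with hb
    have hb0 : b ≠ 0 := by
      rw [hb]; simp [hst0.ne']
    have hbsq : b^2 = T⁻¹ := by
      rw [hb, neg_sq, sq, ← mul_inv, hstsq]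
    have hbc : b^2 < 1/((n:ℝ) - 1) := by
      rw [hbsq, inv_eq_one_div, div_lt_div_iff₀ hT0 (by linarith : (0:ℝ) < (n:ℝ)-1)]
      nlinarith [hTgt]
  -- construct w
    set ca : ℂ := (starRingEnd ℂ) a with hca
    have hca0 : ca ≠ 0 := by
      rw [hca]; simpa using hapos
    set w : EuclideanSpace ℂ (Fin d) := ca⁻¹ • v k - u₀ with hw
    have hcainner : (inner ℂ u₀ (v k) : ℂ) = ca := by
      rw [hca, ha, inner_conj_symm]
    have hinner_uw : (inner ℂ u₀ w : ℂ) = 0 := by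
      rw [hw, inner_sub_right, inner_smul_right, hcainner,
        inner_self_eq_norm_sq_to_K, hu₀norm]
      field_simp
      norm_num
    have hwnormsq : ‖w‖^2 = T := by
      have h1 : (inner ℂ (ca⁻¹ • v k) u₀ : ℂ) = 1 := by
        rw [inner_smul_left, map_inv₀, hca, Complex.conj_conj, ← ha]
        exact inv_mul_cancel₀ hapos
      have h2 : ‖ca⁻¹ • v k‖ = ‖a‖⁻¹ := by
        rw [norm_smul, norm_inv, hca, RCLike.norm_conj, hv k, mul_one]
      rw [hw, @norm_sub_sq ℂ, h1, h2, hu₀norm]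
      simp only [RCLike.one_re]
      rw [hT, hx]
      have habs2 : ‖a‖ ≠ 0 := by
        exact hna.ne'
      field_simp [habs2]
      ring
    -- data for the core lemma
    set α : Fin n → ℂ := fun j => (inner ℂ (v j) u₀ : ℂ) with hα
    set β : Fin n → ℂ := fun j => ((st⁻¹ : ℝ) : ℂ) * (inner ℂ (v j) w : ℂ) with hβ
    have hval : ∏ j, ‖α j‖ = M := by rw [hM, hF]
    have hyp : ∀ ζ : ℂ, ∏ j, ‖α j + ζ * β j‖^2 ≤ M^2 * (1 + ‖ζ‖^2)^n := by
      intro ζ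
      set z : ℂ := ζ * ((st⁻¹ : ℝ) : ℂ) with hz
      set y : EuclideanSpace ℂ (Fin d) := u₀ + z • w with hy
      have hin : ∀ j, (inner ℂ (v j) y : ℂ) = α j + ζ * β j := by
        intro j
        rw [hy, inner_add_right, inner_smul_right, hα, hβ, hz]
        ring
      have hynorm : ‖y‖^2 = 1 + ‖ζ‖^2 := by
        have hz0 : (inner ℂ u₀ (z • w) : ℂ) = 0 := by
          rw [inner_smul_right, hinner_uw, mul_zero]
        rw [hy, @norm_add_sq ℂ, hz0, hu₀norm]
        simp only [map_zero, mul_zero, add_zero]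
        rw [norm_smul, hz, norm_mul, Complex.norm_real,
          Real.norm_of_nonneg (by positivity : (0:ℝ) ≤ st⁻¹)]
        have hw2 : (‖ζ‖ * st⁻¹ * ‖w‖)^2 = ‖ζ‖^2 * (st⁻¹ * st⁻¹ * (‖w‖^2)) := by ring
        rw [hw2, hwnormsq, ← mul_inv, hstsq]
        field_simp
      have hsq : ∏ j, ‖α j + ζ * β j‖^2 = (∏ j, ‖(inner ℂ (v j) y : ℂ)‖)^2 := by
        rw [← Finset.prod_pow]
        exact Finset.prod_congr rfl (fun j _ => by rw [hin j])
      rw [hsq]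
      have hle := homog y
      have hP0 : (0:ℝ) ≤ ∏ j, ‖(inner ℂ (v j) y : ℂ)‖ :=
        Finset.prod_nonneg (fun j _ => norm_nonneg _)
      calc (∏ j, ‖(inner ℂ (v j) y : ℂ)‖)^2 ≤ (M * ‖y‖^n)^2 := by
            apply pow_le_pow_left₀ hP0 hle
        _ = M^2 * (‖y‖^2)^n := by rw [mul_pow, ← pow_mul, ← pow_mul, mul_comm 2 n]
        _ = M^2 * (1 + ‖ζ‖^2)^n := by rw [hynorm]
    have hβk : (inner ℂ (v k) w : ℂ) = ca⁻¹ - a := by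
      rw [hw, inner_sub_right, inner_smul_right, inner_self_eq_norm_sq_to_K, hv k, ← ha]
      norm_num
    have hnormsq : Complex.normSq a = ‖a‖^2 := by
      rw [Complex.normSq_eq_norm_sq]
    have hacax : a * ca = ((x:ℝ) : ℂ) := by
      rw [hca, Complex.mul_conj]
      exact congrArg Complex.ofReal (by rw [hnormsq, hx])
    have hcainv : ca⁻¹ = a / ((x:ℝ) : ℂ) := by
      have hxC : ((x:ℝ):ℂ) ≠ 0 := by
        simp only [ne_eq, Complex.ofReal_eq_zero]
        exact hx0.ne'
      rw [eq_div_iff hxC, ← hacax]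
      field_simp [hca0]
    have hroot : α k + (b:ℂ) * β k = 0 := by
      have hxC : ((x:ℝ):ℂ) ≠ 0 := by
        simp only [ne_eq, Complex.ofReal_eq_zero]; exact hx0.ne'
      have hstC : ((st:ℝ):ℂ) ≠ 0 := by
        simp only [ne_eq, Complex.ofReal_eq_zero]; exact hst0.ne'
      have hTC0 : ((T:ℝ):ℂ) ≠ 0 := by
        simp only [ne_eq, Complex.ofReal_eq_zero]; exact hT0.ne'
      have hTxC : ((T:ℝ):ℂ) * ((x:ℝ):ℂ) = 1 - ((x:ℝ):ℂ) := by
        rw [hT]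
        push_cast
        field_simp
      have hstsqC : ((st:ℝ):ℂ) * ((st:ℝ):ℂ) = ((T:ℝ):ℂ) := by exact_mod_cast hstsq
      have h5 : a / ((x:ℝ):ℂ) - a = a * ((T:ℝ):ℂ) := by
        field_simp
        linear_combination (-1:ℂ) * hTxC
      have key : ((st:ℝ):ℂ)⁻¹ * (((st:ℝ):ℂ)⁻¹ * (a / ((x:ℝ):ℂ) - a)) = a := by
        rw [h5, show ((st:ℝ):ℂ)⁻¹ * (((st:ℝ):ℂ)⁻¹ * (a * ((T:ℝ):ℂ)))
            = (((st:ℝ):ℂ) * ((st:ℝ):ℂ))⁻¹ * (a * ((T:ℝ):ℂ)) by rw [mul_inv]; ring,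
          hstsqC]
        field_simp
      simp only [hα, hβ]
      rw [hβk, hcainv, hb]
      push_cast
      linear_combination -key
    exact plank_core n hn2 M hMpos α β b hb0 hbc hval ⟨k, hroot⟩ hyp
end
end

section
/- Let v_1, …, v_n be unit vectors in ℂ^d with d ≥ 1, and let t_1, …, t_n be positive real numbers satisfying ∑_{k=1}^n t_k^2 = 1. If u is a unit vector maximizing ∏_{k=1}^n |⟨v_k, v⟩|^{t_k^2} over all unit vectors v, then |⟨v_k, u⟩| ≥ t_k for every k = 1, …, n. -/
open Finset

/-- Product of a constant positive base raised to varying real exponents. -/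
lemma weighted_maximizer_prod_rpow_const {ι : Type*} (s : Finset ι) (b : ℝ) (hb : 0 < b)
    (e : ι → ℝ) : ∏ k ∈ s, b ^ e k = b ^ (∑ k ∈ s, e k) := by
  induction s using Finset.cons_induction with
  | empty => simp
  | cons a s ha ih => rw [Finset.prod_cons, Finset.sum_cons, Real.rpow_add hb, ih]

/-- Strict monotonicity of `x ↦ t² log x − ½ log (1+x²)` below `t/√(1-t²)`. -/
lemma weighted_maximizer_gmono {t : ℝ} (ht0 : 0 < t) (ht1 : t < 1) {x y : ℝ} (hx : 0 < x)
    (hxy : x < y) (hy : y ≤ t * (Real.sqrt (1 - t^2))⁻¹) :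
    t^2 * Real.log x - (1/2) * Real.log (1 + x^2) <
      t^2 * Real.log y - (1/2) * Real.log (1 + y^2) := by
  set s : ℝ := Real.sqrt (1 - t^2) with hs
  have hs0 : 0 < s := Real.sqrt_pos.2 (by nlinarith)
  have hs2 : s^2 = 1 - t^2 := Real.sq_sqrt (by nlinarith)
  set g : ℝ → ℝ := fun x => t^2 * Real.log x - (1/2) * Real.log (1 + x^2) with hg
  have hderiv : ∀ z : ℝ, 0 < z →
      HasDerivAt g (t^2 * z⁻¹ - (1/2) * ((2*z) / (1 + z^2))) z := by
    intro z hz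
    have h1 : HasDerivAt (fun x : ℝ => t^2 * Real.log x) (t^2 * z⁻¹) z :=
      (Real.hasDerivAt_log hz.ne').const_mul (t^2)
    have h2 : HasDerivAt (fun x : ℝ => 1 + x^2) (2*z) z := by
      have := (hasDerivAt_pow 2 z).const_add (1:ℝ)
      simpa using this
    have h3 : HasDerivAt (fun x : ℝ => Real.log (1 + x^2)) ((2*z) / (1 + z^2)) z :=
      h2.log (by positivity)
    exact h1.sub (h3.const_mul (1/2))
  have hmono : StrictMonoOn g (Set.Icc x y) := by
    apply strictMonoOn_of_deriv_pos (convex_Icc x y)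
    · intro z hz
      exact ((hderiv z (lt_of_lt_of_le hx hz.1)).continuousAt).continuousWithinAt
    · intro z hz
      rw [interior_Icc] at hz
      have hz0 : 0 < z := hx.trans hz.1
      rw [(hderiv z hz0).deriv]
      have h4 : z * s < t := by
        have h' : z < t * s⁻¹ := lt_of_lt_of_le hz.2 hy
        calc z * s < (t * s⁻¹) * s := mul_lt_mul_of_pos_right h' hs0
        _ = t := by field_simp
      have h4' : (z*s)^2 < t^2 := by nlinarith [mul_pos hz0 hs0]
      have h5 : z^2 * (1 - t^2) < t^2 := by nlinarith
      rw [sub_pos]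
      have e1 : (1/2:ℝ) * (2*z/(1+z^2)) = z/(1+z^2) := by ring
      have e2 : t^2 * z⁻¹ = t^2 / z := by rw [div_eq_mul_inv]
      rw [e1, e2, div_lt_div_iff₀ (by positivity) hz0]
      nlinarith
  exact hmono (Set.left_mem_Icc.2 hxy.le) (Set.right_mem_Icc.2 hxy.le) hxy

/-- The multiplicative form of the key calculus inequality. -/
lemma weighted_maximizer_calc {t a : ℝ} (ha : 0 < a) (hat : a < t) (ht1 : t < 1) :
    (a * (Real.sqrt (1-a^2))⁻¹) ^ (t^2 : ℝ) <
      Real.sqrt (1-t^2) * ((t * (Real.sqrt (1-t^2))⁻¹) ^ (t^2 : ℝ)) * (Real.sqrt (1-a^2))⁻¹ := by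
  have ht0 : 0 < t := ha.trans hat
  set b : ℝ := Real.sqrt (1-a^2) with hbdef
  set s : ℝ := Real.sqrt (1-t^2) with hsdef
  have ha1 : a < 1 := hat.trans ht1
  have hb0 : 0 < b := Real.sqrt_pos.2 (by nlinarith)
  have hs0 : 0 < s := Real.sqrt_pos.2 (by nlinarith)
  have hb2 : b^2 = 1-a^2 := Real.sq_sqrt (by nlinarith)
  have hs2 : s^2 = 1-t^2 := Real.sq_sqrt (by nlinarith)
  set ρ : ℝ := a * b⁻¹ with hρdef
  set r : ℝ := t * s⁻¹ with hrdef
  have hρ0 : 0 < ρ := by positivity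
  have hr0 : 0 < r := by positivity
  have hρr : ρ < r := by
    rw [hρdef, hrdef]
    have h6 : a * s < t * b := by nlinarith [mul_pos ha hs0, mul_pos ht0 hb0]
    calc a * b⁻¹ = (a * s) * (s⁻¹ * b⁻¹) := by field_simp
      _ < (t * b) * (s⁻¹ * b⁻¹) := by
          apply mul_lt_mul_of_pos_right h6 (by positivity)
      _ = t * s⁻¹ := by field_simp
  have hG := weighted_maximizer_gmono ht0 ht1 hρ0 hρr (le_refl r)
  have e1 : 1 + ρ^2 = (b^2)⁻¹ := by
    rw [hρdef]
    field_simp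
    nlinarith
  have e2 : 1 + r^2 = (s^2)⁻¹ := by
    rw [hrdef]
    field_simp
    nlinarith
  have l1 : Real.log (1 + ρ^2) = -(2 * Real.log b) := by
    rw [e1, Real.log_inv, Real.log_pow]
    push_cast; ring
  have l2 : Real.log (1 + r^2) = -(2 * Real.log s) := by
    rw [e2, Real.log_inv, Real.log_pow]
    push_cast; ring
  rw [l1, l2] at hG
  have key : Real.log ρ * t^2 < Real.log s + (Real.log r * t^2 + -Real.log b) := by nlinarith
  calc ρ ^ (t^2:ℝ) = Real.exp (Real.log ρ * t^2) := Real.rpow_def_of_pos hρ0 _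
    _ < Real.exp (Real.log s + (Real.log r * t^2 + -Real.log b)) := Real.exp_lt_exp.2 key
    _ = s * (r ^ (t^2:ℝ) * b⁻¹) := by
        rw [Real.exp_add, Real.exp_add, Real.exp_log hs0, ← Real.rpow_def_of_pos hr0,
          ← Real.log_inv, Real.exp_log (by positivity)]
    _ = s * r ^ (t^2:ℝ) * b⁻¹ := by ring

/-- Maximum-modulus principle for finite products of moduli of affine functions raised to
positive real powers. -/
lemma weighted_maximizer_maxmod {ι : Type*} (S : Finset ι) (A B : ι → ℂ) (e : ι → ℝ)
    (he : ∀ k, 0 < e k) {r : ℝ} (hr : 0 < r) {z₀ : ℂ} (hz₀ : ‖z₀‖ ≤ r) :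
    ∃ z₂ : ℂ, ‖z₂‖ = r ∧
      ∏ k ∈ S, ‖A k + z₀ * B k‖ ^ (e k) ≤ ∏ k ∈ S, ‖A k + z₂ * B k‖ ^ (e k) := by
  classical
  set Φ : ℂ → ℝ := fun z => ∏ k ∈ S, ‖A k + z * B k‖ ^ (e k) with hΦdef
  have hfac_cont : ∀ k : ι, Continuous (fun z : ℂ => ‖A k + z * B k‖ ^ (e k)) := by
    intro k
    exact ((continuous_const.add (continuous_id.mul continuous_const)).norm).rpow_const
      (fun x => Or.inr (he k).le)
  have hΦc : Continuous Φ := continuous_finset_prod _ (fun k _ => hfac_cont k)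
  have hsphere : IsCompact (Metric.sphere (0:ℂ) r) := isCompact_sphere _ _
  have hne : (Metric.sphere (0:ℂ) r).Nonempty := by
    refine ⟨(r:ℂ), ?_⟩
    simp [mem_sphere_zero_iff_norm, Complex.norm_real, abs_of_pos hr]
  obtain ⟨z₂, hz₂mem, hz₂max⟩ := hsphere.exists_isMaxOn hne hΦc.continuousOn
  have hz₂norm : ‖z₂‖ = r := mem_sphere_zero_iff_norm.1 hz₂mem
  refine ⟨z₂, hz₂norm, ?_⟩
  have hΦnonneg : ∀ z : ℂ, 0 ≤ Φ z := by
    intro z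
    exact Finset.prod_nonneg fun k _ => Real.rpow_nonneg (norm_nonneg _) _
  rcases le_or_gt (Φ z₀) 0 with h0 | h0
  · exact le_trans h0 (hΦnonneg z₂)
  have hbase : ∀ k ∈ S, 0 < ‖A k + z₀ * B k‖ := by
    intro k hk
    rcases (norm_nonneg (A k + z₀ * B k)).lt_or_eq with h | h
    · exact h
    · exfalso
      have : Φ z₀ = 0 := by
        apply Finset.prod_eq_zero hk
        rw [← h, Real.zero_rpow (he k).ne']
      rw [this] at h0; exact lt_irrefl _ h0
  set K₁ : ℝ := ∏ k ∈ S, min 1 ‖A k + z₀ * B k‖ with hK₁def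
  have hK₁ : 0 < K₁ :=
    Finset.prod_pos fun k hk => lt_min one_pos (hbase k hk)
  set C : ι → ℝ := fun k => max 1 (‖A k‖ + ‖B k‖ * r) with hCdef
  have hC1 : ∀ k, 1 ≤ C k := fun k => le_max_left _ _
  set K₂ : ℝ := ∏ k ∈ S, C k with hK₂def
  have hK₂ : 0 < K₂ := Finset.prod_pos fun k _ => lt_of_lt_of_le one_pos (hC1 k)
  have key : ∀ N : ℕ, 1 ≤ N → Φ z₀ ^ N * K₁ ≤ Φ z₂ ^ N * K₂ := by
    intro N hN
    set m : ι → ℕ := fun k => ⌈(N : ℝ) * e k⌉₊ with hmdef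
    have hm1 : ∀ k, (N:ℝ) * e k ≤ m k := fun k => Nat.le_ceil _
    have hm2 : ∀ k, (m k : ℝ) ≤ (N:ℝ) * e k + 1 := by
      intro k
      have hpos : (0:ℝ) ≤ (N:ℝ) * e k := mul_nonneg (Nat.cast_nonneg N) (he k).le
      exact (Nat.ceil_lt_add_one hpos).le
    set g : ℂ → ℂ := fun z => ∏ k ∈ S, (A k + z * B k) ^ (m k) with hgdef
    have hgd : Differentiable ℂ g := by
      apply Differentiable.fun_finsetProd
      intro k _
      exact (differentiable_const _ |>.add (differentiable_id.mul (differentiable_const _))).pow _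
    obtain ⟨w, hwmem, hwmax⟩ := hsphere.exists_isMaxOn hne hgd.continuous.norm.continuousOn
    have hwnorm : ‖w‖ = r := mem_sphere_zero_iff_norm.1 hwmem
    have hmaxmod : ‖g z₀‖ ≤ ‖g w‖ := by
      apply Complex.norm_le_of_forall_mem_frontier_norm_le Metric.isBounded_ball
        hgd.diffContOnCl
      · intro z hz
        rw [frontier_ball (0:ℂ) hr.ne'] at hz
        exact hwmax hz
      · rw [closure_ball (0:ℂ) hr.ne']
        exact mem_closedBall_zero_iff.2 hz₀
    have hgnorm : ∀ z : ℂ, ‖g z‖ = ∏ k ∈ S, ‖A k + z * B k‖ ^ (m k) := by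
      intro z
      rw [hgdef]
      rw [norm_prod]
      exact Finset.prod_congr rfl fun k _ => norm_pow _ _
    have step1 : Φ z₀ ^ N * K₁ ≤ ‖g z₀‖ := by
      rw [hgnorm, hΦdef, hK₁def, ← Finset.prod_pow, ← Finset.prod_mul_distrib]
      apply Finset.prod_le_prod
      · intro k hk
        positivity
      · intro k hk
        set x := ‖A k + z₀ * B k‖ with hx
        have hx0 : 0 < x := hbase k hk
        set δ : ℝ := (m k : ℝ) - (N:ℝ) * e k with hδ
        have hδ0 : 0 ≤ δ := by simp only [hδ, sub_nonneg]; exact hm1 k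
        have hδ1 : δ ≤ 1 := by
          have := hm2 k; simp only [hδ]; linarith
        have hxm : x ^ ((m k : ℝ)) = x ^ ((N:ℝ) * e k) * x ^ δ := by
          rw [← Real.rpow_add hx0, hδ]; congr 1; ring
        have hpow : (x ^ (e k)) ^ N = x ^ ((N:ℝ) * e k) := by
          rw [← Real.rpow_natCast (x ^ (e k)) N, ← Real.rpow_mul hx0.le]
          ring_nf
        have hmin : min 1 x ≤ x ^ δ := by
          rcases le_total x 1 with hx1 | hx1
          · rw [min_eq_right hx1]
            calc x = x ^ (1:ℝ) := (Real.rpow_one x).symm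
            _ ≤ x ^ δ := Real.rpow_le_rpow_of_exponent_ge hx0 hx1 hδ1
          · rw [min_eq_left hx1]
            exact Real.one_le_rpow hx1 hδ0
        calc (x ^ (e k)) ^ N * min 1 x ≤ x ^ ((N:ℝ) * e k) * x ^ δ := by
              rw [hpow]
              exact mul_le_mul_of_nonneg_left hmin (by positivity)
        _ = x ^ ((m k : ℝ)) := hxm.symm
        _ = x ^ (m k) := by rw [Real.rpow_natCast]
    have step3 : ‖g w‖ ≤ Φ w ^ N * K₂ := by
      rw [hgnorm, hΦdef, hK₂def, ← Finset.prod_pow, ← Finset.prod_mul_distrib]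
      apply Finset.prod_le_prod
      · intro k hk; positivity
      · intro k hk
        set y := ‖A k + w * B k‖ with hy
        have hy0 : (0:ℝ) ≤ y := norm_nonneg _
        have hyC : y ≤ ‖A k‖ + ‖B k‖ * r := by
          calc y ≤ ‖A k‖ + ‖w * B k‖ := norm_add_le _ _
          _ = ‖A k‖ + ‖B k‖ * r := by rw [norm_mul, hwnorm]; ring
        rcases hy0.lt_or_eq with hy0' | hy0'
        · set δ : ℝ := (m k : ℝ) - (N:ℝ) * e k with hδ
          have hδ0 : 0 ≤ δ := by simp only [hδ, sub_nonneg]; exact hm1 k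
          have hδ1 : δ ≤ 1 := by have := hm2 k; simp only [hδ]; linarith
          have hym : (y:ℝ) ^ (m k) = y ^ ((N:ℝ) * e k) * y ^ δ := by
            rw [← Real.rpow_add hy0', ← Real.rpow_natCast y (m k)]
            congr 1; ring
          have hpow : (y ^ (e k)) ^ N = y ^ ((N:ℝ) * e k) := by
            rw [← Real.rpow_natCast (y ^ (e k)) N, ← Real.rpow_mul hy0'.le]
            ring_nf
          have hyδ : y ^ δ ≤ C k := by
            rcases le_total y 1 with hy1 | hy1
            · exact le_trans (Real.rpow_le_one hy0'.le hy1 hδ0) (hC1 k)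
            · calc y ^ δ ≤ y ^ (1:ℝ) := Real.rpow_le_rpow_of_exponent_le hy1 hδ1
              _ = y := Real.rpow_one y
              _ ≤ C k := le_trans hyC (le_max_right _ _)
          calc (y:ℝ) ^ (m k) = y ^ ((N:ℝ) * e k) * y ^ δ := hym
          _ ≤ y ^ ((N:ℝ) * e k) * C k := mul_le_mul_of_nonneg_left hyδ (by positivity)
          _ = (y ^ (e k)) ^ N * C k := by rw [hpow]
        · have hmk : 0 < m k := by
            rw [hmdef]
            apply Nat.ceil_pos.2
            have hN' : (0:ℝ) < (N:ℝ) := by exact_mod_cast hN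
            exact mul_pos hN' (he k)
          rw [← hy0', zero_pow hmk.ne']
          exact mul_nonneg (pow_nonneg (Real.rpow_nonneg le_rfl _) N)
            ((lt_of_lt_of_le one_pos (hC1 k)).le)
    have step4 : Φ w ≤ Φ z₂ := hz₂max hwmem
    calc Φ z₀ ^ N * K₁ ≤ ‖g z₀‖ := step1
    _ ≤ ‖g w‖ := hmaxmod
    _ ≤ Φ w ^ N * K₂ := step3
    _ ≤ Φ z₂ ^ N * K₂ := by
        apply mul_le_mul_of_nonneg_right _ hK₂.le
        exact pow_le_pow_left₀ (hΦnonneg w) step4 N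
  by_contra hlt
  push_neg at hlt
  have hz₂pos : 0 ≤ Φ z₂ := hΦnonneg z₂
  rcases hz₂pos.lt_or_eq with hz₂pos' | hz₂zero
  · obtain ⟨θ, hθdef⟩ : ∃ θ : ℝ, θ = Φ z₀ / Φ z₂ := ⟨_, rfl⟩
    have hθ1 : 1 < θ := hθdef ▸ (one_lt_div hz₂pos').2 hlt
    have hθ0 : (0:ℝ) ≤ θ := le_trans zero_le_one hθ1.le
    obtain ⟨N, hN⟩ := pow_unbounded_of_one_lt (K₂ / K₁) hθ1
    have hkey := key (N+1) (Nat.le_add_left 1 N)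
    have hθN : θ ^ N ≤ θ ^ (N+1) := by
      calc θ ^ N = θ ^ N * 1 := (mul_one _).symm
      _ ≤ θ ^ N * θ := mul_le_mul_of_nonneg_left hθ1.le (pow_nonneg hθ0 N)
      _ = θ ^ (N+1) := (pow_succ θ N).symm
    have hfin : θ ^ (N+1) ≤ K₂ / K₁ := by
      rw [hθdef, div_pow, div_le_div_iff₀ (pow_pos hz₂pos' _) hK₁]
      linarith [hkey]
    linarith [lt_of_lt_of_le hN hθN]
  · have hkey := key 1 (le_refl 1)
    rw [← hz₂zero] at hkey
    have hpos1 : 0 < Φ z₀ ^ 1 * K₁ := mul_pos (pow_pos h0 1) hK₁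
    have : (0:ℝ) ^ 1 * K₂ = 0 := by ring
    rw [this] at hkey
    linarith

/-- There is a vector on which all the (finitely many) linear functionals `⟪v k, ·⟫` are
nonvanishing. -/
lemma weighted_maximizer_exists_nonvanishing {n d : ℕ} (v : Fin n → EuclideanSpace ℂ (Fin d))
    (hv : ∀ k, ‖v k‖ = 1) (s : Finset (Fin n)) :
    ∃ x : EuclideanSpace ℂ (Fin d), ∀ k ∈ s, (inner ℂ (v k) x : ℂ) ≠ 0 := by
  classical
  induction s using Finset.induction_on with
  | empty => exact ⟨0, by simp⟩
  | @insert a s' ha ih =>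
    obtain ⟨x, hx⟩ := ih
    have hva : (inner ℂ (v a) (v a) : ℂ) ≠ 0 := by
      rw [inner_self_eq_norm_sq_to_K, hv a]
      norm_num
    set bad : Finset ℂ :=
      (insert a s').image (fun k => -(inner ℂ (v k) x : ℂ) / (inner ℂ (v k) (v a) : ℂ)) with hbad
    obtain ⟨c, hc⟩ := Infinite.exists_notMem_finset bad
    refine ⟨x + c • v a, ?_⟩
    intro k hk
    rw [inner_add_right, inner_smul_right]
    intro hzero
    by_cases hB : (inner ℂ (v k) (v a) : ℂ) = 0
    · rcases Finset.mem_insert.1 hk with rfl | hks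
      · exact hva hB
      · refine hx k hks ?_
        simpa [hB] using hzero
    · apply hc
      refine Finset.mem_image.2 ⟨k, hk, ?_⟩
      rw [div_eq_iff hB]
      linear_combination -hzero

set_option maxHeartbeats 1000000

/-- Weighted maximizer theorem: if `u` maximizes `∏ k, |⟨v k, v⟩| ^ (t k ^ 2)` over unit
vectors `v`, where the `t k` are positive with `∑ k, t k ^ 2 = 1`, then
`|⟨v k, u⟩| ≥ t k` for every `k`. -/
theorem weighted_maximizer_ge (n d : ℕ) (hd : 1 ≤ d)
    (v : Fin n → EuclideanSpace ℂ (Fin d)) (hv : ∀ k, ‖v k‖ = 1)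
    (t : Fin n → ℝ) (ht : ∀ k, 0 < t k) (htsum : ∑ k, t k ^ 2 = 1)
    (u : EuclideanSpace ℂ (Fin d)) (hu : ‖u‖ = 1)
    (hmax : ∀ w : EuclideanSpace ℂ (Fin d), ‖w‖ = 1 →
      ∏ k, ‖(inner ℂ (v k) w : ℂ)‖ ^ (t k ^ 2 : ℝ) ≤
        ∏ k, ‖(inner ℂ (v k) u : ℂ)‖ ^ (t k ^ 2 : ℝ)) :
    ∀ k, t k ≤ ‖(inner ℂ (v k) u : ℂ)‖ := by
  classical
  intro j
  by_contra hcon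
  push_neg at hcon
  set M : ℝ := ∏ k, ‖(inner ℂ (v k) u : ℂ)‖ ^ (t k ^ 2 : ℝ) with hMdef
  -- M is positive
  obtain ⟨x, hx⟩ := weighted_maximizer_exists_nonvanishing v hv Finset.univ
  have hx0 : x ≠ 0 := by
    intro h
    exact hx j (Finset.mem_univ j) (by simp [h])
  have hxn : (0:ℝ) < ‖x‖ := norm_pos_iff.2 hx0
  set w₀ : EuclideanSpace ℂ (Fin d) := ((‖x‖⁻¹ : ℝ) : ℂ) • x with hw₀def
  have hw₀ : ‖w₀‖ = 1 := by
    rw [hw₀def, norm_smul, Complex.norm_real, Real.norm_eq_abs,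
      abs_of_pos (inv_pos.2 hxn), inv_mul_cancel₀ hxn.ne']
  have hw₀inner : ∀ k, (inner ℂ (v k) w₀ : ℂ) ≠ 0 := by
    intro k
    rw [hw₀def, inner_smul_right]
    exact mul_ne_zero (Complex.ofReal_ne_zero.2 (inv_pos.2 hxn).ne') (hx k (Finset.mem_univ k))
  have hMpos : 0 < M := by
    refine lt_of_lt_of_le ?_ (hmax w₀ hw₀)
    exact Finset.prod_pos fun k _ => Real.rpow_pos_of_pos (norm_pos_iff.2 (hw₀inner k)) _
  have hainner : ∀ k, (inner ℂ (v k) u : ℂ) ≠ 0 := by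
    intro k hk0
    have hM0 : M = 0 := by
      apply Finset.prod_eq_zero (Finset.mem_univ k)
      rw [hk0]
      simp [Real.zero_rpow (pow_ne_zero 2 (ht k).ne')]
    linarith
  set c : ℂ := inner ℂ (v j) u with hcdef
  set a : ℝ := ‖c‖ with hadef
  have ha0 : 0 < a := norm_pos_iff.2 (hainner j)
  have hat : a < t j := hcon
  have htj2 : t j ^ 2 ≤ 1 := by
    rw [← htsum]
    exact Finset.single_le_sum (fun k _ => sq_nonneg (t k)) (Finset.mem_univ j)
  have htj1 : t j ≤ 1 := by nlinarith [ht j]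
  rcases lt_or_ge (t j) 1 with ht1 | ht1'
  swap
  · -- degenerate case `t j = 1`
    have htj : t j = 1 := le_antisymm htj1 ht1'
    have hallj : ∀ k, k = j := by
      intro k
      by_contra hkj
      have hpair : t k ^ 2 + t j ^ 2 ≤ 1 := by
        have hsub : ∑ i ∈ ({k, j} : Finset (Fin n)), t i ^ 2 ≤ ∑ i, t i ^ 2 :=
          Finset.sum_le_sum_of_subset_of_nonneg (Finset.subset_univ _)
            (fun i _ _ => sq_nonneg (t i))
        rw [Finset.sum_pair hkj, htsum] at hsub
        exact hsub
      nlinarith [ht k]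
    have h2 := hmax (v j) (hv j)
    have hLHS : ∏ k, ‖(inner ℂ (v k) (v j) : ℂ)‖ ^ (t k ^ 2 : ℝ) = 1 := by
      apply Finset.prod_eq_one
      intro k _
      rw [hallj k]
      rw [show (inner ℂ (v j) (v j) : ℂ) = 1 by rw [inner_self_eq_norm_sq_to_K, hv j]; norm_num]
      simp
    rw [hLHS] at h2
    have hMlt : M < 1 := by
      rw [hMdef, ← Finset.mul_prod_erase Finset.univ _ (Finset.mem_univ j)]
      have hfj : ‖(inner ℂ (v j) u : ℂ)‖ ^ (t j ^ 2 : ℝ) < 1 := by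
        apply Real.rpow_lt_one (norm_nonneg _) _ (by positivity)
        calc ‖(inner ℂ (v j) u : ℂ)‖ = a := rfl
        _ < 1 := lt_of_lt_of_le hat htj1
      have hrest : ∏ k ∈ Finset.univ.erase j, ‖(inner ℂ (v k) u : ℂ)‖ ^ (t k ^ 2 : ℝ) ≤ 1 := by
        apply Finset.prod_le_one
        · intro k _; positivity
        · intro k _
          apply Real.rpow_le_one (norm_nonneg _) ?_ (by positivity)
          calc ‖(inner ℂ (v k) u : ℂ)‖ ≤ ‖v k‖ * ‖u‖ := norm_inner_le_norm _ _
          _ = 1 := by rw [hv k, hu]; ring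
      calc ‖(inner ℂ (v j) u : ℂ)‖ ^ (t j ^ 2 : ℝ) *
            ∏ k ∈ Finset.univ.erase j, ‖(inner ℂ (v k) u : ℂ)‖ ^ (t k ^ 2 : ℝ)
          ≤ ‖(inner ℂ (v j) u : ℂ)‖ ^ (t j ^ 2 : ℝ) * 1 := by
            apply mul_le_mul_of_nonneg_left hrest (by positivity)
      _ = ‖(inner ℂ (v j) u : ℂ)‖ ^ (t j ^ 2 : ℝ) := mul_one _
      _ < 1 := hfj
    linarith
  -- main case: `a < t j < 1`
  have ha1 : a < 1 := lt_trans hat ht1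
  have hvjvj : (inner ℂ (v j) (v j) : ℂ) = 1 := by
    rw [inner_self_eq_norm_sq_to_K, hv j]; norm_num
  set uperp : EuclideanSpace ℂ (Fin d) := u - c • v j with hperpdef
  have horth : (inner ℂ (v j) uperp : ℂ) = 0 := by
    rw [hperpdef, inner_sub_right, inner_smul_right, hvjvj, mul_one, ← hcdef, sub_self]
  have hdecomp : u = c • v j + uperp := by rw [hperpdef]; abel
  have hperpinner : (inner ℂ (c • v j) uperp : ℂ) = 0 := by
    rw [inner_smul_left, horth, mul_zero]
  have hpyth : a ^ 2 + ‖uperp‖ ^ 2 = 1 := by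
    have h := norm_add_sq_eq_norm_sq_add_norm_sq_of_inner_eq_zero (c • v j) uperp hperpinner
    rw [← hdecomp, hu] at h
    have hcv : ‖c • v j‖ = a := by rw [norm_smul, hv j, mul_one, ← hadef]
    rw [hcv] at h
    rw [pow_two, pow_two]
    linarith [h]
  set b : ℝ := Real.sqrt (1 - a ^ 2) with hbdef
  have hb0 : 0 < b := Real.sqrt_pos.2 (by nlinarith)
  have hb2 : b ^ 2 = 1 - a ^ 2 := Real.sq_sqrt (by nlinarith)
  have hbnorm : ‖uperp‖ = b := by
    rw [hbdef, show (1:ℝ) - a ^ 2 = ‖uperp‖ ^ 2 by linarith]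
    exact (Real.sqrt_sq (norm_nonneg _)).symm
  set e₂ : EuclideanSpace ℂ (Fin d) := ((b⁻¹ : ℝ) : ℂ) • uperp with he₂def
  have he₂inner : (inner ℂ (v j) e₂ : ℂ) = 0 := by
    rw [he₂def, inner_smul_right, horth, mul_zero]
  have he₂norm : ‖e₂‖ = 1 := by
    rw [he₂def, norm_smul, Complex.norm_real, Real.norm_eq_abs,
      abs_of_pos (inv_pos.2 hb0), hbnorm, inv_mul_cancel₀ hb0.ne']
  set A : Fin n → ℂ := fun k => inner ℂ (v k) e₂ with hAdef
  set B : Fin n → ℂ := fun k => inner ℂ (v k) (v j) with hBdef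
  have hWinner : ∀ (z : ℂ) (k : Fin n),
      (inner ℂ (v k) (e₂ + z • v j) : ℂ) = A k + z * B k := by
    intro z k
    have h2 : (inner ℂ (v k) (z • v j) : ℂ) = z * inner ℂ (v k) (v j) :=
      inner_smul_right _ _ _
    rw [inner_add_right, h2]
  have hWnorm : ∀ z : ℂ, ‖e₂ + z • v j‖ ^ 2 = 1 + ‖z‖ ^ 2 := by
    intro z
    have hinz : (inner ℂ e₂ (z • v j) : ℂ) = 0 := by
      rw [inner_smul_right, ← inner_conj_symm e₂ (v j), he₂inner, map_zero, mul_zero]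
    have h := norm_add_sq_eq_norm_sq_add_norm_sq_of_inner_eq_zero e₂ (z • v j) hinz
    rw [he₂norm, norm_smul, hv j, mul_one] at h
    rw [pow_two, pow_two]
    linarith [h]
  set ζ₀ : ℂ := c * ((b⁻¹ : ℝ) : ℂ) with hζ₀def
  have hWζ₀ : e₂ + ζ₀ • v j = ((b⁻¹ : ℝ) : ℂ) • u := by
    calc e₂ + ζ₀ • v j
        = ((b⁻¹ : ℝ) : ℂ) • uperp + (((b⁻¹ : ℝ) : ℂ) * c) • v j := by
          rw [he₂def, hζ₀def, mul_comm]
    _ = ((b⁻¹ : ℝ) : ℂ) • (uperp + c • v j) := by rw [smul_add, smul_smul]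
    _ = ((b⁻¹ : ℝ) : ℂ) • u := by rw [add_comm uperp (c • v j), ← hdecomp]
  set ρ : ℝ := a * b⁻¹ with hρdef
  have hρ0 : 0 < ρ := by rw [hρdef]; exact mul_pos ha0 (inv_pos.2 hb0)
  have hζ₀norm : ‖ζ₀‖ = ρ := by
    rw [hζ₀def, norm_mul, Complex.norm_real, Real.norm_eq_abs,
      abs_of_pos (inv_pos.2 hb0), ← hadef, hρdef]
  set s1 : ℝ := Real.sqrt (1 - t j ^ 2) with hs1def
  have hs10 : 0 < s1 := Real.sqrt_pos.2 (by nlinarith [ht j])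
  have hs12 : s1 ^ 2 = 1 - t j ^ 2 := Real.sq_sqrt (by nlinarith [ht j])
  set r : ℝ := t j * s1⁻¹ with hrdef
  have hr0 : 0 < r := by rw [hrdef]; exact mul_pos (ht j) (inv_pos.2 hs10)
  have hρr : ρ < r := by
    rw [hρdef, hrdef]
    have h6 : a * s1 < t j * b := by nlinarith [mul_pos ha0 hs10, mul_pos (ht j) hb0]
    calc a * b⁻¹ = (a * s1) * (s1⁻¹ * b⁻¹) := by field_simp
      _ < (t j * b) * (s1⁻¹ * b⁻¹) := by
          apply mul_lt_mul_of_pos_right h6 (by positivity)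
      _ = t j * s1⁻¹ := by field_simp
  obtain ⟨z₂, hz₂norm, hΦle⟩ := weighted_maximizer_maxmod (Finset.univ.erase j) A B
    (fun k => t k ^ 2) (fun k => pow_pos (ht k) 2) hr0 (z₀ := ζ₀)
    (by rw [hζ₀norm]; exact hρr.le)
  have hsplit : ∀ z : ℂ, ∏ k, ‖(inner ℂ (v k) (e₂ + z • v j) : ℂ)‖ ^ (t k ^ 2 : ℝ)
      = ‖z‖ ^ (t j ^ 2 : ℝ) *
        ∏ k ∈ Finset.univ.erase j, ‖A k + z * B k‖ ^ (t k ^ 2 : ℝ) := by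
    intro z
    rw [← Finset.mul_prod_erase Finset.univ _ (Finset.mem_univ j)]
    congr 1
    · rw [hWinner z j]
      have hAj : A j = 0 := he₂inner
      have hBj : B j = 1 := hvjvj
      rw [hAj, hBj, zero_add, mul_one]
    · exact Finset.prod_congr rfl fun k _ => by rw [hWinner]
  have hscale : ∀ (y : ℝ), 0 < y → ∀ w : EuclideanSpace ℂ (Fin d),
      ∏ k, ‖(inner ℂ (v k) (((y : ℝ) : ℂ) • w) : ℂ)‖ ^ (t k ^ 2 : ℝ)
        = y * ∏ k, ‖(inner ℂ (v k) w : ℂ)‖ ^ (t k ^ 2 : ℝ) := by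
    intro y hy w
    have hterm : ∀ k : Fin n,
        ‖(inner ℂ (v k) (((y : ℝ) : ℂ) • w) : ℂ)‖ = y * ‖(inner ℂ (v k) w : ℂ)‖ := by
      intro k
      rw [inner_smul_right, norm_mul, Complex.norm_real, Real.norm_eq_abs, abs_of_pos hy]
    calc ∏ k, ‖(inner ℂ (v k) (((y : ℝ) : ℂ) • w) : ℂ)‖ ^ (t k ^ 2 : ℝ)
        = ∏ k, (y ^ (t k ^ 2 : ℝ) * ‖(inner ℂ (v k) w : ℂ)‖ ^ (t k ^ 2 : ℝ)) := by
          refine Finset.prod_congr rfl fun k _ => ?_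
          rw [hterm k, Real.mul_rpow hy.le (norm_nonneg _)]
    _ = (∏ k, y ^ (t k ^ 2 : ℝ)) * ∏ k, ‖(inner ℂ (v k) w : ℂ)‖ ^ (t k ^ 2 : ℝ) :=
          Finset.prod_mul_distrib
    _ = y * ∏ k, ‖(inner ℂ (v k) w : ℂ)‖ ^ (t k ^ 2 : ℝ) := by
          rw [weighted_maximizer_prod_rpow_const _ _ hy, htsum, Real.rpow_one]
  set Φ₀ : ℝ := ∏ k ∈ Finset.univ.erase j, ‖A k + ζ₀ * B k‖ ^ (t k ^ 2 : ℝ) with hΦ₀def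
  set Φ₂ : ℝ := ∏ k ∈ Finset.univ.erase j, ‖A k + z₂ * B k‖ ^ (t k ^ 2 : ℝ) with hΦ₂def
  have hval₀ : ρ ^ (t j ^ 2 : ℝ) * Φ₀ = b⁻¹ * M := by
    rw [hΦ₀def, ← hζ₀norm, ← hsplit ζ₀, hWζ₀, hscale b⁻¹ (inv_pos.2 hb0) u, hMdef]
  set q : ℝ := Real.sqrt (1 + r ^ 2) with hqdef
  have hq0 : 0 < q := Real.sqrt_pos.2 (by positivity)
  have hWz₂n : ‖e₂ + z₂ • v j‖ = q := by
    rw [hqdef, show (1:ℝ) + r ^ 2 = ‖e₂ + z₂ • v j‖ ^ 2 by rw [hWnorm z₂, hz₂norm]]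
    exact (Real.sqrt_sq (norm_nonneg _)).symm
  set w₂ : EuclideanSpace ℂ (Fin d) := ((q⁻¹ : ℝ) : ℂ) • (e₂ + z₂ • v j) with hw₂def
  have hw₂n : ‖w₂‖ = 1 := by
    rw [hw₂def, norm_smul, Complex.norm_real, Real.norm_eq_abs,
      abs_of_pos (inv_pos.2 hq0), hWz₂n, inv_mul_cancel₀ hq0.ne']
  have h3 := hmax w₂ hw₂n
  have hlhs3 : ∏ k, ‖(inner ℂ (v k) w₂ : ℂ)‖ ^ (t k ^ 2 : ℝ)
      = q⁻¹ * (r ^ (t j ^ 2 : ℝ) * Φ₂) := by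
    rw [hw₂def, hscale q⁻¹ (inv_pos.2 hq0), hsplit z₂, hz₂norm, hΦ₂def]
  rw [hlhs3] at h3
  -- relate q and s1
  have hq1r : (1:ℝ) + r ^ 2 = (s1⁻¹) ^ 2 := by
    rw [hrdef, mul_pow, inv_pow]
    rw [show (t j) ^ 2 = 1 - s1 ^ 2 by linarith [hs12]]
    have h10 : s1 ^ 2 ≠ 0 := (pow_pos hs10 2).ne'
    field_simp
    ring
  have hqs : q = s1⁻¹ := by
    rw [hqdef, hq1r]
    exact Real.sqrt_sq (by positivity)
  -- positivity of Φ₀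
  have hρpow : 0 < ρ ^ (t j ^ 2 : ℝ) := Real.rpow_pos_of_pos hρ0 _
  have hΦ₀pos : 0 < Φ₀ := by
    have hΦ₀nonneg : 0 ≤ Φ₀ :=
      Finset.prod_nonneg (fun k _ => Real.rpow_nonneg (norm_nonneg _) _)
    rcases hΦ₀nonneg.lt_or_eq with h | h
    · exact h
    · exfalso
      have hgt : 0 < ρ ^ (t j ^ 2 : ℝ) * Φ₀ := by
        rw [hval₀]
        exact mul_pos (inv_pos.2 hb0) hMpos
      rw [← h, mul_zero] at hgt
      exact lt_irrefl _ hgt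
  -- chain of inequalities
  have hchain : q⁻¹ * (r ^ (t j ^ 2 : ℝ) * Φ₀) ≤ M := by
    calc q⁻¹ * (r ^ (t j ^ 2 : ℝ) * Φ₀) ≤ q⁻¹ * (r ^ (t j ^ 2 : ℝ) * Φ₂) := by
          apply mul_le_mul_of_nonneg_left _ (inv_pos.2 hq0).le
          exact mul_le_mul_of_nonneg_left hΦle (Real.rpow_nonneg hr0.le _)
    _ ≤ M := h3
  have hfin : (q⁻¹ * r ^ (t j ^ 2 : ℝ) * b⁻¹) * M ≤ ρ ^ (t j ^ 2 : ℝ) * M := by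
    have e1 : (q⁻¹ * r ^ (t j ^ 2 : ℝ) * b⁻¹) * M
        = ρ ^ (t j ^ 2 : ℝ) * (q⁻¹ * (r ^ (t j ^ 2 : ℝ) * Φ₀)) := by
      rw [show (q⁻¹ * r ^ (t j ^ 2 : ℝ) * b⁻¹) * M
          = q⁻¹ * r ^ (t j ^ 2 : ℝ) * (b⁻¹ * M) from by ring, ← hval₀]
      ring
    rw [e1]
    exact mul_le_mul_of_nonneg_left hchain hρpow.le
  have hineq : q⁻¹ * r ^ (t j ^ 2 : ℝ) * b⁻¹ ≤ ρ ^ (t j ^ 2 : ℝ) :=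
    le_of_mul_le_mul_right hfin hMpos
  -- contradiction with the calculus lemma
  have hL3 := weighted_maximizer_calc ha0 hat ht1
  rw [← hbdef, ← hs1def, ← hρdef, ← hrdef] at hL3
  rw [hqs, inv_inv] at hineq
  linarith
end

section
/- Let v_1, …, v_n be unit vectors in ℂ^d with d ≥ 1, let u be a unit vector with ⟨v_k, u⟩ ≠ 0 for every k satisfying u = (1/n) ∑_{k=1}^n (1/⟨v_k, u⟩) · v_k, and suppose |⟨v_1, u⟩| < 1/√n. Then there exists a complex number z with |z + ⟨u, v_1⟩| = |⟨v_1, u⟩| such that ∏_{k=2}^n |⟨v_k, z·v_1 + u⟩| > ∏_{k=2}^n |⟨v_k, u⟩|. -/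
private lemma all_eq_one_of_sum_eq_card {ι : Type*} (s : Finset ι) (t : ι → ℂ)
    (hle : ∀ k ∈ s, ‖t k‖ ≤ 1) (hsum : ∑ k ∈ s, t k = (s.card : ℂ)) :
    ∀ k ∈ s, t k = 1 := by
  have hre : ∑ k ∈ s, (t k).re = (s.card : ℝ) := by
    have := congrArg Complex.re hsum
    simpa [Complex.re_sum] using this
  have h1 : ∀ k ∈ s, (t k).re ≤ 1 := fun k hk =>
    (Complex.re_le_norm _).trans (by simpa using hle k hk)
  have hall : ∀ k ∈ s, (t k).re = 1 := by
    have := (Finset.sum_eq_sum_iff_of_le h1).mp ?_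
    · intro k hk; exact (this k hk).symm ▸ rfl
    · rw [hre]; simp
  intro k hk
  have hre1 : (t k).re = 1 := hall k hk
  have habs : ‖t k‖ ≤ 1 := by simpa using hle k hk
  have hnsq : Complex.normSq (t k) ≤ 1 := by
    rw [← Complex.sq_norm]; nlinarith [norm_nonneg (t k)]
  have him : (t k).im = 0 := by
    have := Complex.normSq_apply (t k)
    nlinarith [sq_nonneg (t k).im]
  exact Complex.ext (by simp [hre1]) (by simp [him])

set_option maxHeartbeats 4000000

/-- Key step of the proof: if a unit vector `u` with all `⟨v k, u⟩ ≠ 0` satisfies the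
fixed-point identity and `|⟨v 0, u⟩| < 1/√(n+1)`, then there is a point `z` on the circle
(`|z + ⟨u, v 0⟩| = |⟨v 0, u⟩|`, so that `z • v 0 + u` is a unit vector) where the product
`∏_{k ≠ 0} |⟨v k, z • v 0 + u⟩|` strictly exceeds `∏_{k ≠ 0} |⟨v k, u⟩|`. -/
theorem key_step (n d : ℕ) (hd : 1 ≤ d)
    (v : Fin (n + 1) → EuclideanSpace ℂ (Fin d)) (hv : ∀ k, ‖v k‖ = 1)
    (u : EuclideanSpace ℂ (Fin d)) (hu : ‖u‖ = 1)
    (hne : ∀ k, (inner ℂ (v k) u : ℂ) ≠ 0)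
    (hfix : u = ((n + 1 : ℂ))⁻¹ • ∑ k, ((inner ℂ (v k) u : ℂ))⁻¹ • v k)
    (hsmall : ‖(inner ℂ (v 0) u : ℂ)‖ < 1 / Real.sqrt (n + 1)) :
    ∃ z : ℂ, ‖z + (inner ℂ u (v 0) : ℂ)‖ = ‖(inner ℂ (v 0) u : ℂ)‖ ∧
      ∏ k ∈ Finset.univ.erase (0 : Fin (n + 1)), ‖(inner ℂ (v k) u : ℂ)‖ <
        ∏ k ∈ Finset.univ.erase (0 : Fin (n + 1)),
          ‖(inner ℂ (v k) (z • v 0 + u) : ℂ)‖ := by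
  classical
  set a : Fin (n + 1) → ℂ := fun k => (inner ℂ (v k) u : ℂ) with ha_def
  set β : Fin (n + 1) → ℂ := fun k => (inner ℂ (v 0) (v k) : ℂ) with hβ_def
  set c : ℂ := a 0 with hc_def
  have hane : ∀ k, a k ≠ 0 := hne
  have hcne : c ≠ 0 := hne 0
  have hnne : ((n : ℂ) + 1) ≠ 0 := by
    exact_mod_cast Nat.cast_add_one_ne_zero (R := ℂ) n
  have huu : (inner ℂ u u : ℂ) = 1 := by
    rw [inner_self_eq_norm_sq_to_K, hu]; norm_num
  -- Sum identity with u : ∑ (a k)⁻¹ * conj (a k) = n + 1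
  have hsum1 : ∑ k, (a k)⁻¹ * (starRingEnd ℂ) (a k) = ((n : ℂ) + 1) := by
    have h := congrArg (fun x : EuclideanSpace ℂ (Fin d) => (inner ℂ u x : ℂ)) hfix
    simp only [inner_smul_right, inner_sum, huu] at h
    have h2 : ∀ k, (inner ℂ u (v k) : ℂ) = (starRingEnd ℂ) (a k) := fun k =>
      (inner_conj_symm _ _).symm
    simp only [h2] at h
    exact ((inv_mul_eq_one₀ hnne).mp h.symm).symm
  -- all a k are real
  have hreal : ∀ k, (starRingEnd ℂ) (a k) = a k := by
    have key := all_eq_one_of_sum_eq_card Finset.univ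
      (fun k => (a k)⁻¹ * (starRingEnd ℂ) (a k)) ?_ ?_
    · intro k
      have hthis := key k (Finset.mem_univ k)
      have h4 := congrArg (fun z => a k * z) hthis
      simp only [mul_one] at h4
      rwa [← mul_assoc, mul_inv_cancel₀ (hane k), one_mul] at h4
    · intro k _
      simp only [norm_mul, norm_inv, RCLike.norm_conj]
      rw [inv_mul_cancel₀ (norm_ne_zero_iff.mpr (hane k))]
    · rw [hsum1]; simp
  -- Sum identity with v 0
  have hsum2 : ∑ k, (a k)⁻¹ * β k = ((n : ℂ) + 1) * c := by
    have h := congrArg (fun x : EuclideanSpace ℂ (Fin d) => (inner ℂ (v 0) x : ℂ)) hfix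
    simp only [inner_smul_right, inner_sum] at h
    have h' : ((n : ℂ) + 1) * (inner ℂ (v 0) u : ℂ)
        = ∑ x, ((inner ℂ (v x) u : ℂ))⁻¹ * (inner ℂ (v 0) (v x) : ℂ) := by
      rw [h, ← mul_assoc, mul_inv_cancel₀ hnne, one_mul]
    simp only [hc_def, ha_def, hβ_def]
    exact h'.symm
  have hβ0 : β 0 = 1 := by
    rw [hβ_def]; simp only; rw [inner_self_eq_norm_sq_to_K, hv 0]; norm_num
  set s : Finset (Fin (n + 1)) := Finset.univ.erase 0 with hs_def
  have hsumS : ∑ k ∈ s, (a k)⁻¹ * β k = ((n : ℂ) + 1) * c - c⁻¹ := by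
    rw [hs_def, Finset.sum_erase_eq_sub (Finset.mem_univ 0), hsum2, hβ0]
    rw [hc_def]; ring
  -- the polynomial
  set q : ℂ → ℂ := fun w => ∏ k ∈ s, (a k + w * β k) with hq_def
  have hq0 : q 0 = ∏ k ∈ s, a k := by simp [hq_def]
  have hq0ne : q 0 ≠ 0 := by
    rw [hq0]; exact Finset.prod_ne_zero_iff.mpr fun k _ => hane k
  set q' : ℂ := q 0 * (((n : ℂ) + 1) * c - c⁻¹) with hq'_def
  -- derivative of q at 0
  have hqd : HasDerivAt q q' 0 := by
    have h : ∀ k ∈ s, HasDerivAt (fun w : ℂ => a k + w * β k) (β k) 0 :=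
      fun k _ => by simpa using (hasDerivAt_id (0:ℂ)).mul_const (β k) |>.const_add (a k)
    have hdv := HasDerivAt.fun_finsetProd h
    refine hdv.congr_deriv ?_; symm
    rw [hq'_def, hq0, ← hsumS, Finset.mul_sum, Finset.sum_congr rfl]
    intro k hk
    rw [smul_eq_mul]
    have hpe := Finset.mul_prod_erase s a hk
    simp only [mul_zero, zero_mul, add_zero, zero_add]
    rw [← hpe]
    have hcan : (a k * ∏ x ∈ s.erase k, a x) * ((a k)⁻¹ * β k)
        = (a k * (a k)⁻¹) * ((∏ x ∈ s.erase k, a x) * β k) := by ring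
    rw [hcan, mul_inv_cancel₀ (hane k), one_mul]
  -- real components
  set γ : ℝ := c.re with hγ_def
  have hcγ : c = (γ : ℂ) := by
    have := hreal 0
    rw [Complex.conj_eq_iff_re] at this
    exact this.symm
  have hγne : γ ≠ 0 := by
    intro h; apply hcne; rw [hcγ, h]; simp
  have hsm : ((n : ℝ) + 1) * γ ^ 2 < 1 := by
    have hγabs : ‖c‖ = |γ| := by rw [hcγ]; simp
    have hsq : Real.sqrt ((n : ℝ) + 1) > 0 := Real.sqrt_pos.mpr (by positivity)
    have h1 : ‖c‖ * ‖c‖ < (1 / Real.sqrt (n + 1)) * (1 / Real.sqrt (n + 1)) := by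
      have := hsmall
      push_cast at this ⊢
      exact mul_self_lt_mul_self (norm_nonneg _) this
    rw [div_mul_div_comm, one_mul, Real.mul_self_sqrt (by positivity)] at h1
    rw [hγabs, ← abs_mul, abs_mul_self] at h1
    rw [lt_div_iff₀ (by positivity)] at h1
    push_cast at h1 ⊢
    nlinarith
  set r : ℝ := Complex.normSq (q 0) * (1 - ((n : ℝ) + 1) * γ ^ 2) with hr_def
  have hrpos : 0 < r := by
    have := Complex.normSq_pos.mpr hq0ne
    rw [hr_def]; nlinarith
  set F : ℝ → ℝ := fun t => ((starRingEnd ℂ) (q 0) * q ((t : ℂ) * (-c))).re with hF_def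
  have hFd : HasDerivAt F r 0 := by
    have h1 : HasDerivAt (fun t : ℝ => (t : ℂ) * (-c)) (-c) 0 := by
      simpa using (Complex.ofRealCLM.hasDerivAt (x := (0:ℝ))).mul_const (-c)
    have h2 : HasDerivAt (fun t : ℝ => q ((t : ℂ) * (-c))) ((-c) • q') 0 :=
      hqd.scomp_of_eq 0 h1 (by simp)
    have h3 : HasDerivAt (fun t : ℝ => (starRingEnd ℂ) (q 0) * q ((t : ℂ) * (-c)))
        ((starRingEnd ℂ) (q 0) * ((-c) • q')) 0 := h2.const_mul _
    have h4 := Complex.reCLM.hasFDerivAt.comp_hasDerivAt 0 h3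
    have h5 : HasDerivAt F (((starRingEnd ℂ) (q 0) * ((-c) * q')).re) 0 := by
      rw [hF_def]; exact h4.congr_deriv (by simp)
    have hval : ((starRingEnd ℂ) (q 0) * ((-c) * q')).re = r := by
      have e2 : (-c) * (((n : ℂ) + 1) * c - c⁻¹) = 1 - ((n : ℂ) + 1) * c ^ 2 := by
        field_simp; ring
      have e1 : (starRingEnd ℂ) (q 0) * ((-c) * q')
          = ((starRingEnd ℂ) (q 0) * q 0) * ((-c) * (((n : ℂ) + 1) * c - c⁻¹)) := by
        rw [hq'_def]; ring
      rw [e1, e2]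
      have e3 : (starRingEnd ℂ) (q 0) * q 0 = (Complex.normSq (q 0) : ℂ) := by
        rw [mul_comm, Complex.mul_conj]
      rw [e3, hcγ]
      have e4 : 1 - ((n : ℂ) + 1) * ((γ : ℂ)) ^ 2 = ((1 - ((n : ℝ) + 1) * γ ^ 2 : ℝ) : ℂ) := by
        push_cast; ring
      rw [e4, ← Complex.ofReal_mul, Complex.ofReal_re, hr_def]
    rwa [hval] at h5
  -- find t ∈ (0,1) with F 0 < F t
  obtain ⟨t, ht0, ht1, htF⟩ : ∃ t : ℝ, 0 < t ∧ t < 1 ∧ F 0 < F t := by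
    have hs := hasDerivAt_iff_tendsto_slope.mp hFd
    have h1 : ∀ᶠ t in nhdsWithin 0 (Set.Ioi (0:ℝ)), 0 < slope F 0 t := by
      have hmono := hs.mono_left (nhdsWithin_mono 0
        (fun x (hx : x ∈ Set.Ioi (0:ℝ)) => ne_of_gt hx))
      exact hmono.eventually (eventually_gt_nhds hrpos)
    have h2 : ∀ᶠ t in nhdsWithin 0 (Set.Ioi (0:ℝ)), t < 1 := by
      filter_upwards [Ioo_mem_nhdsGT_of_mem (by norm_num : (0:ℝ) ∈ Set.Ico (0:ℝ) 1)]
        with t ht using ht.2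
    have h3 : ∀ᶠ t in nhdsWithin 0 (Set.Ioi (0:ℝ)), 0 < t :=
      eventually_mem_nhdsWithin
    obtain ⟨t, hts, ht1, ht0⟩ := (h1.and (h2.and h3)).exists
    refine ⟨t, ht0, ht1, ?_⟩
    rw [slope_def_field, sub_zero] at hts
    rcases div_pos_iff.mp hts with ⟨h6, _⟩ | ⟨_, h6⟩
    · linarith
    · linarith
  -- interior point with bigger modulus
  have hF0 : F 0 = ‖q 0‖ ^ 2 := by
    rw [hF_def]
    simp only [Complex.ofReal_zero, zero_mul, mul_comm, Complex.mul_conj]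
    rw [Complex.ofReal_re, Complex.normSq_eq_norm_sq]
  have hFt : F t ≤ ‖q 0‖ * ‖q ((t : ℂ) * (-c))‖ := by
    rw [hF_def]
    refine (Complex.re_le_norm _).trans ?_
    rw [norm_mul]
    simp
  have hw0 : ‖q 0‖ < ‖q ((t : ℂ) * (-c))‖ := by
    have hq0pos : 0 < ‖q 0‖ := norm_pos_iff.mpr hq0ne
    have : ‖q 0‖ * ‖q 0‖ < ‖q 0‖ * ‖q ((t : ℂ) * (-c))‖ := by
      calc ‖q 0‖ * ‖q 0‖ = F 0 := by rw [hF0]; ring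
        _ < F t := htF
        _ ≤ _ := hFt
    exact lt_of_mul_lt_mul_left this (le_of_lt hq0pos)
  -- max modulus
  have hcpos : 0 < ‖c‖ := norm_pos_iff.mpr hcne
  obtain ⟨w, hw_mem, hw_gt⟩ : ∃ w ∈ Metric.sphere (-c) ‖c‖, ‖q 0‖ < ‖q w‖ := by
    by_contra hcon
    push_neg at hcon
    have hdiff : DiffContOnCl ℂ q (Metric.ball (-c) ‖c‖) := by
      refine Differentiable.diffContOnCl ?_
      rw [hq_def]
      exact Differentiable.fun_finsetProd fun k _ =>
        (differentiable_const (a k)).add (differentiable_id.mul_const (β k))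
    have hfr : ∀ z ∈ frontier (Metric.ball (-c) ‖c‖), ‖q z‖ ≤ ‖q 0‖ := by
      rw [frontier_ball (-c) (ne_of_gt hcpos)]
      exact hcon
    have hmemball : (t : ℂ) * (-c) ∈ Metric.ball (-c) ‖c‖ := by
      rw [Metric.mem_ball, dist_eq_norm]
      have he : (t : ℂ) * (-c) - (-c) = (1 - (t : ℂ)) * c := by ring
      rw [he, norm_mul]
      have h1t : ‖(1 : ℂ) - (t : ℂ)‖ = 1 - t := by
        rw [← Complex.ofReal_one, ← Complex.ofReal_sub, Complex.norm_real]
        exact abs_of_pos (by linarith)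
      rw [h1t]
      nlinarith
    have := Complex.norm_le_of_forall_mem_frontier_norm_le Metric.isBounded_ball
      hdiff hfr (subset_closure hmemball)
    exact absurd this (not_le.mpr hw0)
  -- assemble
  have ha' : ∀ k, a k = (inner ℂ (v k) u : ℂ) := fun k => by rw [ha_def]
  have hβ' : ∀ k, β k = (inner ℂ (v 0) (v k) : ℂ) := fun k => by rw [hβ_def]
  have hc' : c = (inner ℂ (v 0) u : ℂ) := by rw [hc_def, ha' 0]
  refine ⟨(starRingEnd ℂ) w, ?_, ?_⟩
  · have h1 : (inner ℂ u (v 0) : ℂ) = (starRingEnd ℂ) (inner ℂ (v 0) u : ℂ) :=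
      (inner_conj_symm u (v 0)).symm
    rw [h1, ← hc', ← map_add, RCLike.norm_conj]
    have h2 : ‖w + c‖ = ‖c‖ := by
      have h3 := hw_mem
      rw [Metric.mem_sphere, dist_eq_norm, sub_neg_eq_add] at h3
      exact h3
    rw [h2]
  · have hterm : ∀ k ∈ s, ‖(inner ℂ (v k) ((starRingEnd ℂ) w • v 0 + u) : ℂ)‖
        = ‖a k + w * β k‖ := by
      intro k _
      have he : (inner ℂ (v k) ((starRingEnd ℂ) w • v 0 + u) : ℂ)
          = (starRingEnd ℂ) w * (inner ℂ (v k) (v 0) : ℂ) + (inner ℂ (v k) u : ℂ) := by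
        rw [inner_add_right, inner_smul_right]
      have he2 : (inner ℂ (v k) (v 0) : ℂ) = (starRingEnd ℂ) (inner ℂ (v 0) (v k) : ℂ) :=
        (inner_conj_symm (v k) (v 0)).symm
      rw [he, he2, ← ha' k, ← hβ' k, ← map_mul, ← hreal k, ← map_add, RCLike.norm_conj,
        add_comm, hreal k]
    have hgoal : ∏ k ∈ s, ‖(inner ℂ (v k) ((starRingEnd ℂ) w • v 0 + u) : ℂ)‖
        = ∏ k ∈ s, ‖a k + w * β k‖ := Finset.prod_congr rfl hterm
    have hlhs : ∏ k ∈ s, ‖(inner ℂ (v k) u : ℂ)‖ = ‖q 0‖ := by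
      rw [hq0, norm_prod]
    have hrhs : ∏ k ∈ s, ‖a k + w * β k‖ = ‖q w‖ := by
      rw [hq_def]; rw [norm_prod]
    calc ∏ k ∈ s, ‖(inner ℂ (v k) u : ℂ)‖ = ‖q 0‖ := hlhs
      _ < ‖q w‖ := hw_gt
      _ = ∏ k ∈ s, ‖(inner ℂ (v k) ((starRingEnd ℂ) w • v 0 + u) : ℂ)‖ := by
          rw [hgoal, hrhs]
end
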